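/- arXiv:1505.04646 — 6 statements merged into one kernel-verified Lean document; each statement's English description precedes it below -/
import Mathlib

section
/- Almost all graphs are connected with diameter 2. Precisely: the proportion of labeled simple graphs on vertex set {1,...,n} (out of all 2^(n choose 2) such graphs) that are connected and have diameter exactly 2 tends to 1 as n tends to infinity. -/
open Classical in
/-- The proportion of labeled simple graphs on `{1,…,n}` (modeled as `Fin n`) satisfying `P`,
out of all `2 ^ (n choose 2)` labeled simple graphs. -/
noncomputable def graphProportion (n : ℕ) (P : SimpleGraph (Fin n) → Prop) : ℝ :=
  ((Finset.univ.filter P).card : ℝ) / 2 ^ n.choose 2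

open Finset SimpleGraph Filter


open Finset SimpleGraph

open Classical in
noncomputable def graphEquiv (V : Type*) [Fintype V] [DecidableEq V] :
    SimpleGraph V ≃ ({e : Sym2 V // ¬ e.IsDiag} → Bool) where
  toFun G e := decide (e.1 ∈ G.edgeSet)
  invFun f := SimpleGraph.fromEdgeSet {e | ∃ h : ¬ e.IsDiag, f ⟨e, h⟩ = true}
  left_inv G := by
    ext x y
    simp only [fromEdgeSet_adj, Set.mem_setOf_eq, mem_edgeSet, decide_eq_true_eq]
    constructor
    · rintro ⟨⟨h, ha⟩, hne⟩; exact ha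
    · intro h
      exact ⟨⟨by simp [Sym2.mk_isDiag_iff, h.ne], h⟩, h.ne⟩
  right_inv f := by
    funext e
    obtain ⟨e, he⟩ := e
    induction e with
    | _ x y =>
      simp only [edgeSet_fromEdgeSet, Set.mem_diff, Set.mem_setOf_eq]
      have hxy : x ≠ y := by simpa [Sym2.mk_isDiag_iff] using he
      by_cases hf : f ⟨s(x,y), he⟩ = true
      · simp [hf, he]
      · simp only [Bool.not_eq_true] at hf
        simp [hf, he]

theorem card_simpleGraph (V : Type*) [Fintype V] [DecidableEq V] :
    Fintype.card (SimpleGraph V) = 2 ^ (Fintype.card V).choose 2 := by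
  rw [Fintype.card_congr (graphEquiv V), Fintype.card_fun, Fintype.card_bool,
    Sym2.card_subtype_not_diag]

section
variable {n : ℕ} (u v : Fin n)

/-- the bad event for a pair: not adjacent and no common neighbor -/
def BadPair (G : SimpleGraph (Fin n)) (u v : Fin n) : Prop :=
  ¬ G.Adj u v ∧ ∀ w, ¬ (G.Adj u w ∧ G.Adj v w)

open Classical in
/-- modified relation -/
def modRel (G : SimpleGraph (Fin n)) (g₁ g₂ : {w : Fin n // w ≠ u ∧ w ≠ v} → Bool)
    (b : Bool) (x y : Fin n) : Prop :=
  (x = u ∧ y = v ∧ b = true) ∨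
  (x = u ∧ y ≠ v ∧ (if h : y ≠ u ∧ y ≠ v then g₁ ⟨y, h⟩ else false) = true) ∨
  (x = v ∧ y ≠ u ∧ (if h : y ≠ u ∧ y ≠ v then g₂ ⟨y, h⟩ else false) = true) ∨
  (x ≠ u ∧ x ≠ v ∧ y ≠ u ∧ y ≠ v ∧ G.Adj x y)

variable {G : SimpleGraph (Fin n)}
  {g₁ g₂ : {w : Fin n // w ≠ u ∧ w ≠ v} → Bool} {b : Bool}

lemma modRel_adj_uv (huv : u ≠ v) :
    (SimpleGraph.fromRel (modRel u v G g₁ g₂ b)).Adj u v ↔ b = true := by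
  simp only [fromRel_adj, modRel, huv, huv.symm, ne_eq, not_true_eq_false, false_and, and_false,
    not_false_eq_true, true_and, and_true, or_false, false_or]

lemma modRel_adj_uw (huv : u ≠ v) {w : Fin n} (hw : w ≠ u ∧ w ≠ v) :
    (SimpleGraph.fromRel (modRel u v G g₁ g₂ b)).Adj u w ↔ g₁ ⟨w, hw⟩ = true := by
  simp only [fromRel_adj, modRel, huv, huv.symm, hw.1, hw.2, hw.1.symm, hw.2.symm, dif_pos hw,
    ne_eq, not_true_eq_false, false_and, and_false, not_false_eq_true, true_and, and_true,
    or_false, false_or]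
  tauto

lemma modRel_adj_vw (huv : u ≠ v) {w : Fin n} (hw : w ≠ u ∧ w ≠ v) :
    (SimpleGraph.fromRel (modRel u v G g₁ g₂ b)).Adj v w ↔ g₂ ⟨w, hw⟩ = true := by
  simp only [fromRel_adj, modRel, huv, huv.symm, hw.1, hw.2, hw.1.symm, hw.2.symm, dif_pos hw,
    ne_eq, not_true_eq_false, false_and, and_false, not_false_eq_true, true_and, and_true,
    or_false, false_or]
  tauto

lemma modRel_adj_ww {x y : Fin n} (hx : x ≠ u ∧ x ≠ v) (hy : y ≠ u ∧ y ≠ v) :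
    (SimpleGraph.fromRel (modRel u v G g₁ g₂ b)).Adj x y ↔ G.Adj x y := by
  simp only [fromRel_adj, modRel, hx.1, hx.2, hy.1, hy.2, ne_eq, not_false_eq_true, true_and,
    false_and, and_false, false_or]
  constructor
  · rintro ⟨hne, h | h⟩
    · exact h
    · exact h.symm
  · intro h
    exact ⟨h.ne, Or.inl h⟩

end

open Classical in
lemma card_badPair_le (n : ℕ) (u v : Fin n) (huv : u ≠ v) :
    Fintype.card {G : SimpleGraph (Fin n) // BadPair G u v} * 2 ^ (2 * (n - 2) + 1)
      ≤ 3 ^ (n - 2) * 2 ^ n.choose 2 := by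
  set W := {w : Fin n // w ≠ u ∧ w ≠ v} with hWdef
  set Pat := {t : Bool × Bool // t ≠ (true, true)} with hPatdef
  let Φ : {G : SimpleGraph (Fin n) // BadPair G u v} × ((W → Bool) × (W → Bool) × Bool) →
      (W → Pat) × SimpleGraph (Fin n) :=
    fun x =>
      (fun w => ⟨(decide (x.1.1.Adj u w), decide (x.1.1.Adj v w)), by
          intro hc
          have h1 := congrArg Prod.fst hc
          have h2 := congrArg Prod.snd hc
          simp only [decide_eq_true_eq] at h1 h2
          exact x.1.2.2 w ⟨h1, h2⟩⟩,
       SimpleGraph.fromRel (modRel u v x.1.1 x.2.1 x.2.2.1 x.2.2.2))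
  have hΦ : Function.Injective Φ := by
    rintro ⟨⟨G, hG⟩, g₁, g₂, b⟩ ⟨⟨G', hG'⟩, g₁', g₂', b'⟩ h
    have hP := congrArg Prod.fst h
    have hGr := congrArg Prod.snd h
    simp only [Φ] at hP hGr
    have hpu : ∀ w : W, (G.Adj u w ↔ G'.Adj u w) := by
      intro w
      have h1 := congrArg (fun t => t.1.1) (congrFun hP w)
      simpa only [decide_eq_decide] using h1
    have hpv : ∀ w : W, (G.Adj v w ↔ G'.Adj v w) := by
      intro w
      have h1 := congrArg (fun t => t.1.2) (congrFun hP w)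
      simpa only [decide_eq_decide] using h1
    have hadj : ∀ x y : Fin n, ((SimpleGraph.fromRel (modRel u v G g₁ g₂ b)).Adj x y ↔
        (SimpleGraph.fromRel (modRel u v G' g₁' g₂' b')).Adj x y) := by
      intro x y; rw [hGr]
    have hb : b = b' := by
      have h1 := hadj u v
      rw [modRel_adj_uv u v huv, modRel_adj_uv u v huv] at h1
      cases b <;> cases b' <;> simp_all
    have hg₁ : g₁ = g₁' := by
      funext w
      have h1 := hadj u w
      rw [modRel_adj_uw u v huv w.2, modRel_adj_uw u v huv w.2] at h1
      cases hq : g₁ w <;> cases hq' : g₁' w <;> simp_all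
    have hg₂ : g₂ = g₂' := by
      funext w
      have h1 := hadj v w
      rw [modRel_adj_vw u v huv w.2, modRel_adj_vw u v huv w.2] at h1
      cases hq : g₂ w <;> cases hq' : g₂' w <;> simp_all
    have hGG : G = G' := by
      ext x y
      by_cases hxu : x = u
      · by_cases hyu : y = u
        · rw [hxu, hyu]; simp
        · by_cases hyv : y = v
          · rw [hxu, hyv]
            exact ⟨fun h => absurd h hG.1, fun h => absurd h hG'.1⟩
          · rw [hxu]; exact hpu ⟨y, hyu, hyv⟩
      · by_cases hxv : x = v
        · by_cases hyu : y = u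
          · rw [hxv, hyu, G.adj_comm, G'.adj_comm]
            exact ⟨fun h => absurd h hG.1, fun h => absurd h hG'.1⟩
          · by_cases hyv : y = v
            · rw [hxv, hyv]; simp
            · rw [hxv]; exact hpv ⟨y, hyu, hyv⟩
        · by_cases hyu : y = u
          · rw [hyu, G.adj_comm, G'.adj_comm]
            exact hpu ⟨x, hxu, hxv⟩
          · by_cases hyv : y = v
            · rw [hyv, G.adj_comm, G'.adj_comm]
              exact hpv ⟨x, hxu, hxv⟩
            · have h1 := hadj x y
              rw [modRel_adj_ww u v ⟨hxu, hxv⟩ ⟨hyu, hyv⟩,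
                modRel_adj_ww u v ⟨hxu, hxv⟩ ⟨hyu, hyv⟩] at h1
              exact h1
    simp only [Prod.mk.injEq, Subtype.mk.injEq]
    exact ⟨hGG, hg₁, hg₂, hb⟩
  have hcard := Fintype.card_le_of_injective Φ hΦ
  have hW : Fintype.card W = n - 2 := by
    rw [Fintype.card_subtype]
    have heq : (univ.filter fun w : Fin n => w ≠ u ∧ w ≠ v) = univ \ {u, v} := by
      ext w
      simp [not_or]
    rw [heq, card_sdiff_of_subset (subset_univ _), card_univ, Fintype.card_fin, card_pair huv]
  have hPat : Fintype.card Pat = 3 := by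
    show Fintype.card {t : Bool × Bool // t ≠ (true, true)} = 3
    decide
  simp only [Fintype.card_prod, Fintype.card_fun, Fintype.card_bool, hW, hPat,
    card_simpleGraph, Fintype.card_fin] at hcard
  calc Fintype.card {G : SimpleGraph (Fin n) // BadPair G u v} * 2 ^ (2 * (n - 2) + 1)
      = Fintype.card {G : SimpleGraph (Fin n) // BadPair G u v} *
        (2 ^ (n - 2) * (2 ^ (n - 2) * 2)) := by ring
    _ ≤ 3 ^ (n - 2) * 2 ^ n.choose 2 := hcard

/-- if every pair of distinct vertices is adjacent or has a common neighbor,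
and the graph is not complete, then it is good -/
lemma good_of_not_bad {n : ℕ} (hn : 2 ≤ n) (G : SimpleGraph (Fin n)) (hT : G ≠ ⊤)
    (hB : ∀ u v : Fin n, u ≠ v → ¬ BadPair G u v) :
    G.Connected ∧ (∀ u v : Fin n, G.dist u v ≤ 2) ∧ ∃ u v : Fin n, G.dist u v = 2 := by
  have hwalk : ∀ x y : Fin n, x ≠ y → ∃ w : G.Walk x y, w.length ≤ 2 := by
    intro x y hxy
    have h := hB x y hxy
    rw [BadPair, not_and_or, not_not] at h
    rcases h with h | h
    · exact ⟨h.toWalk, by simp⟩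
    · push_neg at h
      obtain ⟨w, h1, h2⟩ := h
      by_contra hc
      exact hc ⟨Walk.cons h1 (Walk.cons h2.symm Walk.nil), by simp⟩
  have hdist : ∀ x y : Fin n, G.dist x y ≤ 2 := by
    intro x y
    by_cases hxy : x = y
    · subst hxy; rw [SimpleGraph.dist_self]; omega
    · obtain ⟨w, hw⟩ := hwalk x y hxy
      exact (SimpleGraph.dist_le w).trans hw
  have hreach : ∀ x y : Fin n, G.Reachable x y := by
    intro x y
    by_cases hxy : x = y
    · exact hxy ▸ SimpleGraph.Reachable.refl x
    · obtain ⟨w, _⟩ := hwalk x y hxy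
      exact ⟨w⟩
  haveI : Nonempty (Fin n) := ⟨⟨0, by omega⟩⟩
  have hconn : G.Connected := ⟨fun x y => hreach x y⟩
  refine ⟨hconn, hdist, ?_⟩
  have hex : ∃ u v : Fin n, u ≠ v ∧ ¬ G.Adj u v := by
    by_contra hc
    push_neg at hc
    apply hT
    ext x y
    simp only [top_adj]
    exact ⟨fun h => h.ne, fun h => hc x y h⟩
  obtain ⟨u, v, hne, hnadj⟩ := hex
  refine ⟨u, v, ?_⟩
  have h0 : 0 < G.dist u v := (hreach u v).pos_dist_of_ne hne
  have h1 : G.dist u v ≠ 1 := fun h => hnadj (SimpleGraph.dist_eq_one_iff_adj.mp h)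
  have h2 := hdist u v
  omega

open Classical in
lemma badcard_le (n : ℕ) (hn : 2 ≤ n) :
    (univ.filter (fun G : SimpleGraph (Fin n) =>
        ¬ (G.Connected ∧ (∀ u v : Fin n, G.dist u v ≤ 2) ∧ ∃ u v : Fin n, G.dist u v = 2))).card
      ≤ 1 + ∑ p ∈ (univ : Finset (Fin n)).offDiag,
          (univ.filter (fun G : SimpleGraph (Fin n) => BadPair G p.1 p.2)).card := by
  have hsub : (univ.filter (fun G : SimpleGraph (Fin n) =>
        ¬ (G.Connected ∧ (∀ u v : Fin n, G.dist u v ≤ 2) ∧ ∃ u v : Fin n, G.dist u v = 2)))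
      ⊆ insert ⊤ (((univ : Finset (Fin n)).offDiag).biUnion
          (fun p => univ.filter (fun G : SimpleGraph (Fin n) => BadPair G p.1 p.2))) := by
    intro G hG
    rw [mem_filter] at hG
    by_cases hT : G = ⊤
    · exact mem_insert.mpr (Or.inl hT)
    · refine mem_insert_of_mem ?_
      rw [mem_biUnion]
      by_contra hc
      push_neg at hc
      refine hG.2 (good_of_not_bad hn G hT fun u v huv hB => ?_)
      exact (hc (u, v) (mem_offDiag.mpr ⟨mem_univ _, mem_univ _, huv⟩))
        (mem_filter.mpr ⟨mem_univ _, hB⟩)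
  calc (univ.filter (fun G : SimpleGraph (Fin n) =>
        ¬ (G.Connected ∧ (∀ u v : Fin n, G.dist u v ≤ 2) ∧ ∃ u v : Fin n, G.dist u v = 2))).card
      ≤ _ := card_le_card hsub
    _ ≤ 1 + (((univ : Finset (Fin n)).offDiag).biUnion
          (fun p => univ.filter (fun G : SimpleGraph (Fin n) => BadPair G p.1 p.2))).card := by
        have := card_insert_le (⊤ : SimpleGraph (Fin n))
          ((((univ : Finset (Fin n)).offDiag).biUnion
            (fun p => univ.filter (fun G : SimpleGraph (Fin n) => BadPair G p.1 p.2))))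
        omega
    _ ≤ _ := by
        have := Finset.card_biUnion_le (s := (univ : Finset (Fin n)).offDiag)
          (t := fun p => univ.filter (fun G : SimpleGraph (Fin n) => BadPair G p.1 p.2))
        omega

/-- Almost all graphs are connected with diameter 2. -/
theorem almost_all_graphs_connected_diameter_two :
    Filter.Tendsto
      (fun n => graphProportion n (fun G =>
        G.Connected ∧ (∀ u v : Fin n, G.dist u v ≤ 2) ∧ ∃ u v : Fin n, G.dist u v = 2))
      Filter.atTop (nhds 1) := by
  classical
  set Q : ∀ n : ℕ, SimpleGraph (Fin n) → Prop := fun n G =>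
    G.Connected ∧ (∀ u v : Fin n, G.dist u v ≤ 2) ∧ ∃ u v : Fin n, G.dist u v = 2 with hQ
  have hform : ∀ n : ℕ, graphProportion n (Q n)
      = 1 - ((univ.filter fun G : SimpleGraph (Fin n) => ¬ Q n G).card : ℝ) / 2 ^ n.choose 2 := by
    intro n
    have htot := Finset.card_filter_add_card_filter_not (s := (univ : Finset (SimpleGraph (Fin n)))) (p := Q n)
    rw [Finset.card_univ, card_simpleGraph, Fintype.card_fin] at htot
    have h2 : (0:ℝ) < 2 ^ n.choose 2 := by positivity
    have hc : ((univ.filter (Q n)).card : ℝ)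
        + ((univ.filter fun G : SimpleGraph (Fin n) => ¬ Q n G).card : ℝ) = 2 ^ n.choose 2 := by
      exact_mod_cast htot
    rw [graphProportion]
    rw [eq_sub_iff_add_eq, ← add_div, div_eq_one_iff_eq (by positivity)]
    convert hc using 4
    exact Finset.filter_congr_decidable _ _ _
  simp only [hQ] at hform
  rw [show (fun n => graphProportion n (fun G : SimpleGraph (Fin n) =>
      G.Connected ∧ (∀ u v : Fin n, G.dist u v ≤ 2) ∧ ∃ u v : Fin n, G.dist u v = 2))
    = (fun n => 1 - ((univ.filter fun G : SimpleGraph (Fin n) =>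
        ¬ (G.Connected ∧ (∀ u v : Fin n, G.dist u v ≤ 2) ∧ ∃ u v : Fin n, G.dist u v = 2)).card : ℝ)
          / 2 ^ n.choose 2) from funext hform]
  have hbad : Tendsto (fun n => ((univ.filter fun G : SimpleGraph (Fin n) =>
      ¬ (G.Connected ∧ (∀ u v : Fin n, G.dist u v ≤ 2) ∧ ∃ u v : Fin n, G.dist u v = 2)).card : ℝ)
        / 2 ^ n.choose 2) atTop (nhds 0) := by
    apply tendsto_of_tendsto_of_tendsto_of_le_of_le' (g := fun _ : ℕ => (0:ℝ))
      (h := fun n : ℕ => (1/2:ℝ)^(n.choose 2) + (8/9)*(n:ℝ)^2*(3/4:ℝ)^n)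
    · exact tendsto_const_nhds
    · have h1 : Tendsto (fun n : ℕ => (1/2:ℝ)^(n.choose 2)) atTop (nhds 0) := by
        apply (tendsto_pow_atTop_nhds_zero_of_lt_one (by norm_num) (by norm_num)).comp
        apply tendsto_atTop_mono (f := fun n : ℕ => n - 1)
        · intro n
          rw [Nat.choose_two_right]
          rcases Nat.lt_or_ge n 2 with h | h
          · interval_cases n <;> simp
          · rw [Nat.le_div_iff_mul_le (by norm_num)]
            calc (n-1) * 2 = 2 * (n-1) := by ring
              _ ≤ n * (n-1) := Nat.mul_le_mul_right _ h
        · exact tendsto_sub_atTop_nat 1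
      have h2 : Tendsto (fun n : ℕ => (8/9:ℝ)*(n:ℝ)^2*(3/4:ℝ)^n) atTop (nhds 0) := by
        have := (tendsto_pow_const_mul_const_pow_of_abs_lt_one 2
          (r := (3/4:ℝ)) (by rw [abs_of_pos] <;> norm_num)).const_mul (8/9:ℝ)
        simpa [mul_assoc] using this
      simpa using h1.add h2
    · filter_upwards with n
      positivity
    · filter_upwards [eventually_ge_atTop 2] with n hn
      obtain ⟨m, rfl⟩ : ∃ m, n = m + 2 := ⟨n - 2, by omega⟩
      set C := (m+2).choose 2 with hC
      have hpos : (0:ℝ) < 2 ^ C := by positivity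
      -- step 1 : cast covering bound
      have hb1 : ((univ.filter fun G : SimpleGraph (Fin (m+2)) =>
          ¬ (G.Connected ∧ (∀ u v, G.dist u v ≤ 2) ∧ ∃ u v, G.dist u v = 2)).card : ℝ)
          ≤ 1 + ∑ p ∈ (univ : Finset (Fin (m+2))).offDiag,
              ((univ.filter (fun G : SimpleGraph (Fin (m+2)) => BadPair G p.1 p.2)).card : ℝ) := by
        have := badcard_le (m+2) (by omega)
        push_cast
        exact_mod_cast this
      -- step 2 : individual bound
      have hb2 : ∀ p ∈ (univ : Finset (Fin (m+2))).offDiag,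
          ((univ.filter (fun G : SimpleGraph (Fin (m+2)) => BadPair G p.1 p.2)).card : ℝ)
            ≤ 3^m * 2^C / 2^(2*m+1) := by
        intro p hp
        have hne : p.1 ≠ p.2 := (Finset.mem_offDiag.mp hp).2.2
        have hnat := card_badPair_le (m+2) p.1 p.2 hne
        rw [Nat.add_sub_cancel] at hnat
        rw [Fintype.card_subtype] at hnat
        rw [le_div_iff₀ (by positivity)]
        exact_mod_cast hnat
      -- step 3 : sum bound
      have hb3 : ∑ p ∈ (univ : Finset (Fin (m+2))).offDiag,
            ((univ.filter (fun G : SimpleGraph (Fin (m+2)) => BadPair G p.1 p.2)).card : ℝ)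
          ≤ ((m+2:ℕ):ℝ)^2 * (3^m * 2^C / 2^(2*m+1)) := by
        calc _ ≤ (((univ : Finset (Fin (m+2))).offDiag.card) : ℝ) * (3^m * 2^C / 2^(2*m+1)) := by
              have := Finset.sum_le_card_nsmul _ _ _ hb2
              simpa [nsmul_eq_mul] using this
          _ ≤ _ := by
              apply mul_le_mul_of_nonneg_right _ (by positivity)
              rw [Finset.offDiag_card, Finset.card_univ, Fintype.card_fin]
              calc (((m+2) * (m+2) - (m+2) : ℕ) : ℝ) ≤ (((m+2) * (m+2) : ℕ) : ℝ) := by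
                    exact_mod_cast Nat.sub_le _ _
                _ = _ := by push_cast; ring
      -- combine
      have hb4 : ((univ.filter fun G : SimpleGraph (Fin (m+2)) =>
          ¬ (G.Connected ∧ (∀ u v, G.dist u v ≤ 2) ∧ ∃ u v, G.dist u v = 2)).card : ℝ) / 2^C
          ≤ (1 + ((m+2:ℕ):ℝ)^2 * (3^m * 2^C / 2^(2*m+1))) / 2^C := by
        gcongr
        linarith
      refine hb4.trans (le_of_eq ?_)
      have h4 : (4:ℝ)^(m+2) = 2^(2*m+1) * 8 := by
        rw [show (4:ℝ) = 2^2 by norm_num, ← pow_mul, show 2*(m+2) = (2*m+1)+3 by ring, pow_add]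
        norm_num
      have h3 : (3:ℝ)^(m+2) = 3^m * 9 := by rw [pow_add]; norm_num
      simp only [div_pow, one_pow]
      rw [h4, h3]
      push_cast
      field_simp
  have := tendsto_const_nhds (x := (1:ℝ)) (f := atTop (α := ℕ)) |>.sub hbad
  simpa using this
end

section
/- For every nonnegative integer k, almost all graphs are k-connected. Precisely: for each fixed k ≥ 0, the proportion of labeled simple graphs on vertex set {1,...,n} that are k-connected tends to 1 as n tends to infinity. -/
open Finset SimpleGraph Classical Filter

section AuxAlmostAllConnected

variable {V : Type*} [Fintype V] [DecidableEq V]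



open Classical in
lemma count_disjoint (F : Finset (Sym2 V)) (hF : F ⊆ (⊤ : SimpleGraph V).edgeFinset) :
    (Finset.univ.filter (fun G : SimpleGraph V => Disjoint G.edgeFinset F)).card
      = 2 ^ ((⊤ : SimpleGraph V).edgeFinset.card - F.card) := by
  rw [← Finset.card_sdiff_of_subset hF, ← Finset.card_powerset]
  refine Finset.card_bij' (fun G _ => G.edgeFinset)
    (fun s _ => SimpleGraph.fromEdgeSet ↑s) ?_ ?_ ?_ ?_
  · intro G hG
    simp only [Finset.mem_filter] at hG
    rw [Finset.mem_powerset, Finset.subset_sdiff]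
    exact ⟨edgeFinset_mono le_top, hG.2⟩
  · intro s hs
    simp [Finset.mem_filter, Finset.mem_univ, true_and]
    rw [Finset.mem_powerset, Finset.subset_sdiff] at hs
    rw [← Finset.disjoint_coe, coe_edgeFinset, edgeSet_fromEdgeSet]
    exact Set.disjoint_of_subset_left Set.diff_subset (by exact_mod_cast hs.2)
  · intro G hG
    simp only [coe_edgeFinset, fromEdgeSet_edgeSet]
  · intro s hs
    rw [Finset.mem_powerset, Finset.subset_sdiff] at hs
    apply Finset.coe_injective
    simp only [coe_edgeFinset, edgeSet_fromEdgeSet]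
    ext e
    simp only [Set.mem_diff, Finset.mem_coe, Set.mem_setOf_eq]
    refine ⟨fun h => h.1, fun he => ⟨he, ?_⟩⟩
    have := hs.1 he
    rw [mem_edgeFinset, edgeSet_top] at this
    exact this




/-- cross edges between A and B -/
def crossF (A B : Finset V) : Finset (Sym2 V) :=
  (A ×ˢ B).image (fun p => s(p.1, p.2))

lemma crossF_subset_top {A B : Finset V} (h : Disjoint A B) :
    crossF A B ⊆ (⊤ : SimpleGraph V).edgeFinset := by
  intro e he
  simp only [crossF, Finset.mem_image, Finset.mem_product] at he
  obtain ⟨⟨a, b⟩, ⟨ha, hb⟩, rfl⟩ := he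
  rw [mem_edgeFinset, edgeSet_top]
  simp only [Set.mem_setOf_eq, Sym2.isDiag_iff_proj_eq]
  exact fun hab => (Finset.disjoint_left.1 h ha) (hab ▸ hb)

lemma crossF_card {A B : Finset V} (h : Disjoint A B) :
    (crossF A B).card = A.card * B.card := by
  rw [crossF, Finset.card_image_of_injOn, Finset.card_product]
  rintro ⟨a, b⟩ hab ⟨a', b'⟩ hab' he
  simp only [Finset.mem_coe, Finset.mem_product] at hab hab'
  rw [Sym2.eq_iff] at he
  rcases he with ⟨rfl, rfl⟩ | ⟨rfl, rfl⟩
  · rfl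
  · exact absurd hab'.2 (Finset.disjoint_left.1 h hab.1)

open Classical in
lemma disjoint_crossF_iff {A B : Finset V} (G : SimpleGraph V) :
    Disjoint G.edgeFinset (crossF A B) ↔ ∀ a ∈ A, ∀ b ∈ B, ¬ G.Adj a b := by
  rw [Finset.disjoint_right]
  constructor
  · intro h a ha b hb hadj
    refine h ?_ (by rwa [mem_edgeFinset, mem_edgeSet])
    simp only [crossF, Finset.mem_image, Finset.mem_product]
    exact ⟨(a, b), ⟨ha, hb⟩, rfl⟩
  · intro h e he hem
    simp only [crossF, Finset.mem_image, Finset.mem_product] at he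
    obtain ⟨⟨a, b⟩, ⟨ha, hb⟩, rfl⟩ := he
    rw [mem_edgeFinset, mem_edgeSet] at hem
    exact h a ha b hb hem




open Classical in
lemma exists_witness {k : ℕ} (G : SimpleGraph V) (hk : k < Fintype.card V)
    (S : Finset V) (hS : S.card < k)
    (hnc : ¬ (G.induce (↑S : Set V)ᶜ).Connected) :
    ∃ A B : Finset V, A.Nonempty ∧ B.Nonempty ∧ Disjoint A B ∧
      Fintype.card V + 1 - k ≤ A.card + B.card ∧
      ∀ a ∈ A, ∀ b ∈ B, ¬ G.Adj a b := by
  have hcompl_card : Sᶜ.card = Fintype.card V - S.card := Finset.card_compl S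
  have hmem : ∀ x : V, x ∈ Sᶜ ↔ x ∈ ((↑S : Set V)ᶜ) := by
    intro x; simp [Finset.mem_compl]
  have hne_type : Nonempty ((↑S : Set V)ᶜ : Set V) := by
    have : Sᶜ.Nonempty := Finset.card_pos.1 (by omega)
    obtain ⟨x, hx⟩ := this
    exact ⟨⟨x, (hmem x).1 hx⟩⟩
  rw [SimpleGraph.connected_iff] at hnc
  push_neg at hnc
  have hnp : ¬ (G.induce (↑S : Set V)ᶜ).Preconnected := fun hp => @IsEmpty.false _ (hnc hp) hne_type.some
  rw [SimpleGraph.Preconnected] at hnp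
  push_neg at hnp
  obtain ⟨u, v, huv⟩ := hnp
  set A : Finset V := Sᶜ.filter
    (fun x => ∃ (h : x ∈ ((↑S : Set V)ᶜ)), (G.induce (↑S : Set V)ᶜ).Reachable u ⟨x, h⟩) with hA
  set B : Finset V := Sᶜ \ A with hB
  have hAsub : A ⊆ Sᶜ := Finset.filter_subset _ _
  have huA : (u : V) ∈ A := by
    rw [hA, Finset.mem_filter]
    exact ⟨(hmem u).2 u.2, u.2, by rw [Subtype.coe_eta]⟩
  have hvB : (v : V) ∈ B := by
    rw [hB, Finset.mem_sdiff]
    refine ⟨(hmem v).2 v.2, ?_⟩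
    rw [hA, Finset.mem_filter]
    rintro ⟨-, h, hr⟩
    rw [Subtype.coe_eta] at hr
    exact huv hr
  refine ⟨A, B, ⟨_, huA⟩, ⟨_, hvB⟩, Finset.disjoint_sdiff, ?_, ?_⟩
  · have h1 : A.card + B.card = Sᶜ.card := by
      rw [hB, Finset.card_sdiff_of_subset hAsub]
      have := Finset.card_le_card hAsub
      omega
    omega
  · intro a ha b hb hadj
    rw [hA, Finset.mem_filter] at ha
    obtain ⟨-, haS, hra⟩ := ha
    rw [hB, Finset.mem_sdiff] at hb
    obtain ⟨hbS, hbA⟩ := hb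
    have hbS' : b ∈ ((↑S : Set V)ᶜ) := (hmem b).1 hbS
    have hadj' : (G.induce (↑S : Set V)ᶜ).Adj ⟨a, haS⟩ ⟨b, hbS'⟩ := by
      simp [SimpleGraph.comap_adj, hadj]
    exact hbA (by rw [hA, Finset.mem_filter]; exact ⟨hbS, hbS', hra.trans hadj'.reachable⟩)





open Classical in
/-- index set of pairs -/
def pairSet (V : Type*) [Fintype V] [DecidableEq V] (k : ℕ) : Finset (Finset V × Finset V) :=
  Finset.univ.filter (fun p => p.1.Nonempty ∧ p.2.Nonempty ∧ Disjoint p.1 p.2 ∧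
    Fintype.card V + 1 - k ≤ p.1.card + p.2.card)

open Classical in
lemma bad_card_le (k : ℕ) (hk : k < Fintype.card V) :
    (Finset.univ.filter (fun G : SimpleGraph V =>
        ¬ (k < Fintype.card V ∧ ∀ S : Finset V, S.card < k →
          (G.induce (↑S : Set V)ᶜ).Connected))).card
      ≤ ∑ p ∈ pairSet V k, 2 ^ ((Fintype.card V).choose 2 - p.1.card * p.2.card) := by
  have hsub : (Finset.univ.filter (fun G : SimpleGraph V =>
        ¬ (k < Fintype.card V ∧ ∀ S : Finset V, S.card < k →
          (G.induce (↑S : Set V)ᶜ).Connected)))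
      ⊆ (pairSet V k).biUnion (fun p =>
          Finset.univ.filter (fun G => Disjoint G.edgeFinset (crossF p.1 p.2))) := by
    intro G hG
    rw [Finset.mem_filter] at hG
    have hG' := hG.2
    push_neg at hG'
    obtain ⟨S, hS, hnc⟩ := hG' hk
    obtain ⟨A, B, hAne, hBne, hdisj, hcard, hnoadj⟩ := exists_witness G hk S hS hnc
    rw [Finset.mem_biUnion]
    refine ⟨(A, B), ?_, ?_⟩
    · rw [pairSet, Finset.mem_filter]
      exact ⟨Finset.mem_univ _, hAne, hBne, hdisj, hcard⟩
    · rw [Finset.mem_filter]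
      exact ⟨Finset.mem_univ _, (disjoint_crossF_iff G).2 hnoadj⟩
  calc _ ≤ _ := Finset.card_le_card hsub
    _ ≤ ∑ p ∈ pairSet V k,
        (Finset.univ.filter (fun G : SimpleGraph V =>
          Disjoint G.edgeFinset (crossF p.1 p.2))).card := Finset.card_biUnion_le
    _ ≤ _ := by
        refine Finset.sum_le_sum (fun p hp => ?_)
        rw [pairSet, Finset.mem_filter] at hp
        rw [count_disjoint _ (crossF_subset_top hp.2.2.2.1),
          crossF_card hp.2.2.2.1, card_edgeFinset_top_eq_card_choose_two]




open Classical in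
lemma count_large (hn : 1 ≤ Fintype.card V) (c : ℕ) :
    (Finset.univ.filter (fun B : Finset V => Fintype.card V - c ≤ B.card)).card
      ≤ (c + 1) * (Fintype.card V) ^ c := by
  have h1 : (Finset.univ.filter (fun B : Finset V => Fintype.card V - c ≤ B.card)).card
      ≤ (Finset.univ.filter (fun C : Finset V => C.card ≤ c)).card := by
    apply Finset.card_le_card_of_injOn (fun B => Bᶜ)
    · intro B hB
      simp only [Finset.mem_coe, Finset.mem_filter, Finset.mem_univ, true_and] at hB ⊢
      rw [Finset.card_compl]
      have := Finset.card_le_univ B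
      omega
    · intro B _ B' _ h
      exact compl_injective h
  refine h1.trans ?_
  have h2 : (Finset.univ.filter (fun C : Finset V => C.card ≤ c))
      ⊆ (Finset.range (c + 1)).biUnion (fun i => Finset.powersetCard i (Finset.univ : Finset V)) := by
    intro C hC
    simp only [Finset.mem_filter, Finset.mem_univ, true_and] at hC
    rw [Finset.mem_biUnion]
    exact ⟨C.card, Finset.mem_range.2 (by omega),
      (Finset.mem_powersetCard).2 ⟨Finset.subset_univ _, rfl⟩⟩
  refine (Finset.card_le_card h2).trans ?_
  refine le_trans (Finset.card_biUnion_le (s := Finset.range (c + 1)) (t := fun i => Finset.powersetCard i (Finset.univ : Finset V))) ?_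
  have h3 : ∀ i ∈ Finset.range (c + 1),
      (Finset.powersetCard i (Finset.univ : Finset V)).card ≤ (Fintype.card V) ^ c := by
    intro i hi
    rw [Finset.card_powersetCard, Finset.card_univ]
    refine (Nat.choose_le_pow _ _).trans ?_
    exact Nat.pow_le_pow_right hn (by simpa using Nat.lt_succ_iff.1 (Finset.mem_range.1 hi))
  calc _ ≤ ∑ _i ∈ Finset.range (c + 1), (Fintype.card V) ^ c := Finset.sum_le_sum h3
    _ = (c + 1) * (Fintype.card V) ^ c := by rw [Finset.sum_const, Finset.card_range, smul_eq_mul]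

open Classical in
lemma fiber_card_le (k j : ℕ) (hn : 1 ≤ Fintype.card V) (hj : 1 ≤ j) :
    ((pairSet V k).filter (fun p => min p.1.card p.2.card = j)).card
      ≤ 2 * ((k + j) * (Fintype.card V) ^ (k + j - 1) * (Fintype.card V) ^ j) := by
  set n := Fintype.card V
  have hsub : ((pairSet V k).filter (fun p => min p.1.card p.2.card = j))
      ⊆ ((Finset.univ.filter (fun A : Finset V => A.card = j)) ×ˢ
          (Finset.univ.filter (fun B : Finset V => n - (k + j - 1) ≤ B.card)))
        ∪ ((Finset.univ.filter (fun A : Finset V => n - (k + j - 1) ≤ A.card)) ×ˢ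
          (Finset.univ.filter (fun B : Finset V => B.card = j))) := by
    intro p hp
    simp only [Finset.mem_filter, pairSet, Finset.mem_univ, true_and] at hp
    obtain ⟨⟨hA, hB, hd, hsum⟩, hmin⟩ := hp
    have hAn := Finset.card_le_univ p.1
    have hBn := Finset.card_le_univ p.2
    rw [Finset.mem_union]
    rcases Nat.le_total p.1.card p.2.card with hle | hle
    · rw [min_eq_left hle] at hmin
      left
      rw [Finset.mem_product]
      simp only [Finset.mem_filter, Finset.mem_univ, true_and]
      omega
    · rw [min_eq_right hle] at hmin
      right
      rw [Finset.mem_product]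
      simp only [Finset.mem_filter, Finset.mem_univ, true_and]
      omega
  refine (Finset.card_le_card hsub).trans ?_
  refine (Finset.card_union_le _ _).trans ?_
  have hc1 : (Finset.univ.filter (fun A : Finset V => A.card = j)).card ≤ n ^ j := by
    have : (Finset.univ.filter (fun A : Finset V => A.card = j))
        = Finset.powersetCard j (Finset.univ : Finset V) := by
      rw [Finset.powersetCard_eq_filter, Finset.powerset_univ]
    rw [this, Finset.card_powersetCard, Finset.card_univ]
    exact Nat.choose_le_pow _ _
  have hc2 := count_large hn (k + j - 1)
  have hkj : k + j - 1 + 1 = k + j := by omega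
  rw [Finset.card_product, Finset.card_product]
  rw [hkj] at hc2
  calc _ ≤ n ^ j * ((k + j) * n ^ (k + j - 1)) + (k + j) * n ^ (k + j - 1) * n ^ j :=
        Nat.add_le_add (Nat.mul_le_mul hc1 hc2) (Nat.mul_le_mul hc2 hc1)
    _ = 2 * ((k + j) * n ^ (k + j - 1) * n ^ j) := by ring





open Classical in
lemma sum_est (k : ℕ) (hn : k + 1 ≤ Fintype.card V)
    (hq : (Fintype.card V : ℝ) ^ 2 * ((1 : ℝ) / 2) ^ ((Fintype.card V + 2 - k) / 2) ≤ 1) :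
    ∑ p ∈ pairSet V k, ((1 : ℝ) / 2) ^ (p.1.card * p.2.card)
      ≤ 2 * ((Fintype.card V : ℝ) + 1) * (k + Fintype.card V) * (Fintype.card V) ^ (k + 1)
          * ((1 : ℝ) / 2) ^ ((Fintype.card V + 2 - k) / 2) := by
  set n := Fintype.card V with hndef
  set M : ℕ := (n + 2 - k) / 2 with hM
  set q : ℝ := ((1 : ℝ) / 2) ^ M with hqdef
  have hq0 : (0 : ℝ) ≤ q := by positivity
  have hn1 : 1 ≤ n := by omega
  -- fiberwise decomposition
  have hfib := Finset.sum_fiberwise_of_maps_to (g := fun p : Finset V × Finset V =>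
      min p.1.card p.2.card) (s := pairSet V k) (t := Finset.range (n + 1))
    (fun p hp => by
      have h1 := Finset.card_le_univ p.1
      simp only [Finset.mem_range]
      have : min p.1.card p.2.card ≤ p.1.card := min_le_left _ _
      omega)
    (fun p => ((1 : ℝ) / 2) ^ (p.1.card * p.2.card))
  rw [← hfib]
  -- bound each fiber
  have hfiber : ∀ j ∈ Finset.range (n + 1),
      ∑ p ∈ (pairSet V k).filter (fun p => min p.1.card p.2.card = j),
        ((1 : ℝ) / 2) ^ (p.1.card * p.2.card)
      ≤ 2 * ((k : ℝ) + n) * (n : ℝ) ^ (k + 1) * q := by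
    intro j hj
    rcases Nat.eq_zero_or_pos j with rfl | hj1
    · have hempty : (pairSet V k).filter
          (fun p => min p.1.card p.2.card = 0) = ∅ := by
        ext p
        simp only [Finset.mem_filter, pairSet, Finset.mem_univ, true_and,
          Finset.notMem_empty, iff_false]
        rintro ⟨⟨hA, hB, -, -⟩, hmin⟩
        have := Finset.card_pos.2 hA
        have := Finset.card_pos.2 hB
        omega
      rw [hempty, Finset.sum_empty]
      positivity
    · -- per-term bound
      have hterm : ∀ p ∈ (pairSet V k).filter (fun p => min p.1.card p.2.card = j),
          ((1 : ℝ) / 2) ^ (p.1.card * p.2.card) ≤ q ^ j := by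
        intro p hp
        simp only [Finset.mem_filter, pairSet, Finset.mem_univ, true_and] at hp
        obtain ⟨⟨hA, hB, hd, hsum⟩, hmin⟩ := hp
        have hab : j * M ≤ p.1.card * p.2.card := by
          have hmm : min p.1.card p.2.card * max p.1.card p.2.card
              = p.1.card * p.2.card := min_mul_max _ _
          have hMle : M ≤ max p.1.card p.2.card := by
            have := le_max_left p.1.card p.2.card
            have := le_max_right p.1.card p.2.card
            omega
          calc j * M ≤ j * max p.1.card p.2.card := Nat.mul_le_mul_left _ hMle
            _ = p.1.card * p.2.card := by rw [← hmm, hmin]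
        calc ((1 : ℝ) / 2) ^ (p.1.card * p.2.card) ≤ ((1 : ℝ) / 2) ^ (j * M) :=
              pow_le_pow_of_le_one (by norm_num) (by norm_num) hab
          _ = q ^ j := by rw [hqdef, ← pow_mul, mul_comm]
      have hsum1 := Finset.sum_le_card_nsmul _ _ _ hterm
      refine hsum1.trans ?_
      rw [nsmul_eq_mul]
      -- now the cardinality bound
      have hcard := fiber_card_le (V := V) k j hn1 hj1
      have hjn : j ≤ n := by
        simp only [Finset.mem_range] at hj
        omega
      have hcardR : (((pairSet V k).filter
            (fun p => min p.1.card p.2.card = j)).card : ℝ)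
          ≤ 2 * ((k : ℝ) + j) * (n : ℝ) ^ (k + j - 1) * (n : ℝ) ^ j := by
        have this : ((((pairSet V k).filter (fun p => min p.1.card p.2.card = j)).card : ℕ) : ℝ)
            ≤ ((2 * ((k + j) * (Fintype.card V) ^ (k + j - 1) * (Fintype.card V) ^ j) : ℕ) : ℝ) :=
          Nat.cast_le.2 hcard
        push_cast at this
        calc _ ≤ _ := this
          _ = 2 * ((k : ℝ) + j) * (n : ℝ) ^ (k + j - 1) * (n : ℝ) ^ j := by ring
      have hqj : (0:ℝ) ≤ q ^ j := by positivity
      calc (((pairSet V k).filter (fun p => min p.1.card p.2.card = j)).card : ℝ) * q ^ j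
          ≤ (2 * ((k : ℝ) + j) * (n : ℝ) ^ (k + j - 1) * (n : ℝ) ^ j) * q ^ j :=
            mul_le_mul_of_nonneg_right hcardR hqj
        _ ≤ 2 * ((k : ℝ) + n) * (n : ℝ) ^ (k + 1) * q := by
            -- key rearrangement
            obtain ⟨j', rfl⟩ : ∃ j', j = j' + 1 := ⟨j - 1, by omega⟩
            have he1 : k + (j' + 1) - 1 = k + j' := by omega
            rw [he1]
            have hjn' : ((j' : ℝ) + 1) ≤ (n : ℝ) := by exact_mod_cast hjn
            have hfac : ((n : ℝ) ^ 2 * q) ^ j' ≤ 1 := pow_le_one₀ (by positivity) hq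
            calc 2 * ((k : ℝ) + (j' + 1 : ℕ)) * (n : ℝ) ^ (k + j') * (n : ℝ) ^ (j' + 1)
                  * q ^ (j' + 1)
                = 2 * ((k : ℝ) + ((j' : ℝ) + 1)) * ((n : ℝ) ^ (k + 1) * q)
                    * ((n : ℝ) ^ 2 * q) ^ j' := by push_cast; ring
              _ ≤ 2 * ((k : ℝ) + (n : ℝ)) * ((n : ℝ) ^ (k + 1) * q) * 1 := by
                  have h0 : (0 : ℝ) ≤ (n : ℝ) ^ (k + 1) * q := by positivity
                  have h1 : 2 * ((k : ℝ) + ((j' : ℝ) + 1)) ≤ 2 * ((k : ℝ) + (n : ℝ)) := by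
                    linarith
                  have h2 : (0 : ℝ) ≤ ((n : ℝ) ^ 2 * q) ^ j' := by positivity
                  have h3 : (0 : ℝ) ≤ 2 * ((k : ℝ) + ((j' : ℝ) + 1)) := by positivity
                  exact mul_le_mul (mul_le_mul_of_nonneg_right h1 h0) hfac h2
                    (by positivity)
              _ = 2 * ((k : ℝ) + (n : ℝ)) * (n : ℝ) ^ (k + 1) * q := by ring
  calc _ ≤ ∑ _j ∈ Finset.range (n + 1), 2 * ((k : ℝ) + n) * (n : ℝ) ^ (k + 1) * q :=
        Finset.sum_le_sum hfiber
    _ = ((n : ℝ) + 1) * (2 * ((k : ℝ) + n) * (n : ℝ) ^ (k + 1) * q) := by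
        rw [Finset.sum_const, Finset.card_range]
        push_cast
        ring
    _ = 2 * ((n : ℝ) + 1) * ((k : ℝ) + n) * (n : ℝ) ^ (k + 1) * q := by ring







open Classical in
lemma card_simpleGraph_univ :
    (Finset.univ : Finset (SimpleGraph V)).card = 2 ^ (Fintype.card V).choose 2 := by
  have h := count_disjoint (V := V) ∅ (Finset.empty_subset _)
  simp only [Finset.disjoint_empty_right, Finset.filter_true, Finset.card_empty,
    Nat.sub_zero] at h
  rw [h, card_edgeFinset_top_eq_card_choose_two]

open Classical in
lemma badfrac_le_sum (k : ℕ) (hk : k < Fintype.card V) :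
    ((Finset.univ.filter (fun G : SimpleGraph V =>
        ¬ (k < Fintype.card V ∧ ∀ S : Finset V, S.card < k →
          (G.induce (↑S : Set V)ᶜ).Connected))).card : ℝ)
        / 2 ^ (Fintype.card V).choose 2
      ≤ ∑ p ∈ pairSet V k, ((1 : ℝ) / 2) ^ (p.1.card * p.2.card) := by
  rw [div_le_iff₀ (by positivity)]
  have h1 := bad_card_le (V := V) k hk
  calc ((Finset.univ.filter (fun G : SimpleGraph V =>
        ¬ (k < Fintype.card V ∧ ∀ S : Finset V, S.card < k →
          (G.induce (↑S : Set V)ᶜ).Connected))).card : ℝ)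
      ≤ ((∑ p ∈ pairSet V k,
          2 ^ ((Fintype.card V).choose 2 - p.1.card * p.2.card) : ℕ) : ℝ) := by
        exact_mod_cast h1
    _ = ∑ p ∈ pairSet V k,
          ((2 : ℝ)) ^ ((Fintype.card V).choose 2 - p.1.card * p.2.card) := by push_cast; rfl
    _ = (∑ p ∈ pairSet V k, ((1 : ℝ) / 2) ^ (p.1.card * p.2.card))
          * 2 ^ (Fintype.card V).choose 2 := by
        rw [Finset.sum_mul]
        refine Finset.sum_congr rfl (fun p hp => ?_)
        simp only [pairSet, Finset.mem_filter, Finset.mem_univ, true_and] at hp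
        obtain ⟨-, -, hd, -⟩ := hp
        have hab : p.1.card * p.2.card ≤ (Fintype.card V).choose 2 := by
          rw [← crossF_card hd, ← card_edgeFinset_top_eq_card_choose_two]
          exact Finset.card_le_card (crossF_subset_top hd)
        have h2 : ((2 : ℝ)) ^ ((Fintype.card V).choose 2 - p.1.card * p.2.card)
            * 2 ^ (p.1.card * p.2.card) = 2 ^ (Fintype.card V).choose 2 := by
          rw [← pow_add]
          congr 1
          omega
        have h3 : ((1 : ℝ) / 2) ^ (p.1.card * p.2.card)
            = ((2 : ℝ) ^ (p.1.card * p.2.card))⁻¹ := by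
          rw [one_div, inv_pow]
        rw [h3]
        field_simp
        linarith [h2]






end AuxAlmostAllConnected

/-- For every nonnegative integer `k`, almost all graphs are `k`-connected: they have more than
`k` vertices, and deleting any set of fewer than `k` vertices leaves a connected graph. -/
theorem almost_all_graphs_k_connected (k : ℕ) :
    Filter.Tendsto
      (fun n => graphProportion n (fun G =>
        k < n ∧ ∀ S : Finset (Fin n), S.card < k → (G.induce (↑S : Set (Fin n))ᶜ).Connected))
      Filter.atTop (nhds 1) := by
  classical
  -- the bad fraction
  set badfrac : ℕ → ℝ := fun n =>
    ((Finset.univ.filter (fun G : SimpleGraph (Fin n) =>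
        ¬ (k < n ∧ ∀ S : Finset (Fin n), S.card < k →
          (G.induce (↑S : Set (Fin n))ᶜ).Connected))).card : ℝ) / 2 ^ n.choose 2
    with hbadfrac
  -- setup for the exponential bound
  have h2 : (1 : ℝ) < Real.sqrt 2 := by
    rw [show (1 : ℝ) = Real.sqrt 1 by simp]
    exact Real.sqrt_lt_sqrt (by norm_num) (by norm_num)
  set s : ℝ := (Real.sqrt 2)⁻¹ with hs
  have hs0 : 0 < s := by positivity
  have hs1 : s < 1 := inv_lt_one_of_one_lt₀ h2
  have hssq : s ^ 2 = 1 / 2 := by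
    rw [hs, inv_pow, Real.sq_sqrt (by norm_num : (0 : ℝ) ≤ 2)]
    norm_num
  set q : ℕ → ℝ := fun n => ((1 : ℝ) / 2) ^ ((n + 2 - k) / 2) with hq
  have hq0 : ∀ n, 0 ≤ q n := fun n => by positivity
  have hqs : ∀ n, k ≤ n → q n ≤ s * s ^ n / s ^ k := by
    intro n hkn
    have h1 : q n = s ^ (2 * ((n + 2 - k) / 2)) := by
      rw [hq, pow_mul, hssq]
    have h2' : n + 1 - k ≤ 2 * ((n + 2 - k) / 2) := by omega
    have h3 : s ^ (2 * ((n + 2 - k) / 2)) ≤ s ^ (n + 1 - k) :=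
      pow_le_pow_of_le_one hs0.le hs1.le h2'
    have h4 : s ^ (n + 1 - k) * s ^ k = s * s ^ n := by
      rw [← pow_add]
      have : n + 1 - k + k = n + 1 := by omega
      rw [this, pow_succ]
      ring
    have h5 : s ^ (n + 1 - k) = s * s ^ n / s ^ k := by
      field_simp
      linarith [h4]
    rw [h1]
    rw [← h5]
    exact h3
  -- generic polynomial-times-geometric limit
  have hhelp : ∀ (K : ℕ) (c : ℝ), Tendsto (fun n : ℕ => c * ((n : ℝ) ^ K * s ^ n))
      atTop (nhds 0) := by
    intro K c
    have h := tendsto_pow_const_div_const_pow_of_one_lt K h2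
    have heq : (fun n : ℕ => c * ((n : ℝ) ^ K * s ^ n))
        = fun n : ℕ => c * ((n : ℝ) ^ K / (Real.sqrt 2) ^ n) := by
      funext n
      rw [hs, inv_pow]
      ring
    rw [heq]
    simpa using h.const_mul c
  -- eventually n^2 * q n ≤ 1
  have hE2 : ∀ᶠ n : ℕ in atTop, (n : ℝ) ^ 2 * q n ≤ 1 := by
    have ht := hhelp 2 (s / s ^ k)
    have hev : ∀ᶠ n : ℕ in atTop, (s / s ^ k) * ((n : ℝ) ^ 2 * s ^ n) ≤ 1 := by
      have := ht.eventually (eventually_le_nhds (zero_lt_one))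
      exact this
    filter_upwards [hev, eventually_ge_atTop k] with n h1 h2'
    have := hqs n h2'
    have hn0 : (0 : ℝ) ≤ (n : ℝ) ^ 2 := by positivity
    calc (n : ℝ) ^ 2 * q n ≤ (n : ℝ) ^ 2 * (s * s ^ n / s ^ k) :=
          mul_le_mul_of_nonneg_left this hn0
      _ = (s / s ^ k) * ((n : ℝ) ^ 2 * s ^ n) := by ring
      _ ≤ 1 := h1
  -- eventual bound on badfrac
  have hbound : ∀ᶠ n : ℕ in atTop,
      badfrac n ≤ (4 * ((k : ℝ) + 1) * s / s ^ k) * ((n : ℝ) ^ (k + 3) * s ^ n) := by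
    filter_upwards [hE2, eventually_ge_atTop (k + 1)] with n hqn hkn
    have hk : k < n := hkn
    have hb1 : badfrac n ≤ ∑ p ∈ pairSet (Fin n) k, ((1 : ℝ) / 2) ^ (p.1.card * p.2.card) := by
      have := badfrac_le_sum (V := Fin n) k (by simpa using hk)
      simp only [Fintype.card_fin] at this
      exact this
    have hb2 : ∑ p ∈ pairSet (Fin n) k, ((1 : ℝ) / 2) ^ (p.1.card * p.2.card)
        ≤ 2 * ((n : ℝ) + 1) * (k + n) * (n : ℝ) ^ (k + 1) * q n := by
      have := sum_est (V := Fin n) k (by simpa using hkn)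
        (by simp only [Fintype.card_fin]; exact hqn)
      simp only [Fintype.card_fin] at this
      exact this
    have hn1 : (1 : ℝ) ≤ (n : ℝ) := by exact_mod_cast Nat.one_le_iff_ne_zero.2 (by omega)
    have hb3 : 2 * ((n : ℝ) + 1) * (k + n) * (n : ℝ) ^ (k + 1) * q n
        ≤ 4 * ((k : ℝ) + 1) * (n : ℝ) ^ (k + 3) * q n := by
      have hP : (0 : ℝ) ≤ (n : ℝ) ^ (k + 1) := by positivity
      have hcoef : 2 * ((n : ℝ) + 1) * (k + n) ≤ 4 * ((k : ℝ) + 1) * (n : ℝ) ^ 2 := by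
        have hk0 : (0 : ℝ) ≤ (k : ℝ) := Nat.cast_nonneg k
        nlinarith [sq_nonneg ((n : ℝ) - 1), sq_nonneg (n : ℝ)]
      have hpow : (n : ℝ) ^ (k + 3) = (n : ℝ) ^ 2 * (n : ℝ) ^ (k + 1) := by
        rw [← pow_add]
        congr 1
        omega
      calc 2 * ((n : ℝ) + 1) * (k + n) * (n : ℝ) ^ (k + 1) * q n
          ≤ 4 * ((k : ℝ) + 1) * (n : ℝ) ^ 2 * (n : ℝ) ^ (k + 1) * q n := by
            have := mul_le_mul_of_nonneg_right
              (mul_le_mul_of_nonneg_right hcoef hP) (hq0 n)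
            linarith [this]
        _ = 4 * ((k : ℝ) + 1) * (n : ℝ) ^ (k + 3) * q n := by rw [hpow]; ring
    have hb4 : 4 * ((k : ℝ) + 1) * (n : ℝ) ^ (k + 3) * q n
        ≤ (4 * ((k : ℝ) + 1) * s / s ^ k) * ((n : ℝ) ^ (k + 3) * s ^ n) := by
      have hqn' := hqs n (by omega)
      have hc : (0 : ℝ) ≤ 4 * ((k : ℝ) + 1) * (n : ℝ) ^ (k + 3) := by positivity
      calc 4 * ((k : ℝ) + 1) * (n : ℝ) ^ (k + 3) * q n
          ≤ 4 * ((k : ℝ) + 1) * (n : ℝ) ^ (k + 3) * (s * s ^ n / s ^ k) :=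
            mul_le_mul_of_nonneg_left hqn' hc
        _ = (4 * ((k : ℝ) + 1) * s / s ^ k) * ((n : ℝ) ^ (k + 3) * s ^ n) := by ring
    linarith
  -- badfrac tends to 0
  have hbad : Tendsto badfrac atTop (nhds 0) := by
    refine squeeze_zero' ?_ hbound (hhelp (k + 3) (4 * ((k : ℝ) + 1) * s / s ^ k))
    filter_upwards with n
    rw [hbadfrac]
    positivity
  -- rewrite the goal
  have hsplit : ∀ n : ℕ, graphProportion n (fun G =>
      k < n ∧ ∀ S : Finset (Fin n), S.card < k → (G.induce (↑S : Set (Fin n))ᶜ).Connected)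
      = 1 - badfrac n := by
    intro n
    have hcards := Finset.card_filter_add_card_filter_not
      (s := (Finset.univ : Finset (SimpleGraph (Fin n))))
      (fun G => k < n ∧ ∀ S : Finset (Fin n), S.card < k →
        (G.induce (↑S : Set (Fin n))ᶜ).Connected)
    have huniv : (Finset.univ : Finset (SimpleGraph (Fin n))).card = 2 ^ n.choose 2 := by
      have := card_simpleGraph_univ (V := Fin n)
      simpa using this
    rw [huniv] at hcards
    rw [graphProportion, hbadfrac]
    have hpos : (0 : ℝ) < 2 ^ n.choose 2 := by positivity
    rw [eq_sub_iff_add_eq, ← add_div, div_eq_one_iff_eq (ne_of_gt hpos)]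
    norm_cast
    convert hcards using 5
  simp only [hsplit]
  have : Tendsto (fun n => 1 - badfrac n) atTop (nhds (1 - 0)) :=
    tendsto_const_nhds.sub hbad
  simpa using this
end

section
/- If a graph G is not complete and has a Hamiltonian path, then the proper connection number of G equals 2. -/
/-- An edge-coloring `c` (on unordered pairs of vertices) makes `G` properly connected if every
pair of distinct vertices is joined by a path whose consecutive edges receive different colors. -/
def IsProperPathColoring {V : Type*} (G : SimpleGraph V) (c : Sym2 V → ℕ) : Prop :=
  ∀ u v : V, u ≠ v → ∃ p : G.Walk u v, p.IsPath ∧ (p.edges.map c).Chain' (· ≠ ·)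

/-- The proper connection number of `G`: the least `k` such that some edge-coloring using at most
`k` colors is a proper-path coloring of `G`. -/
noncomputable def properConnectionNumber {V : Type*} (G : SimpleGraph V) : ℕ :=
  sInf {k | ∃ c : Sym2 V → ℕ, (∀ e, c e < k) ∧ IsProperPathColoring G c}

/-- Consecutive elements of an infix of a nodup list have alternating parities of index. -/
lemma chain'_map_indexOf_mod_two {α : Type*} [DecidableEq α] {l l' : List α}
    (hn : l.Nodup) (h : l' <:+: l) :
    (l'.map (fun e => l.idxOf e % 2)).Chain' (· ≠ ·) := by
  obtain ⟨s, t, rfl⟩ := h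
  have key : ∀ j (hj : j < l'.length), (s ++ l' ++ t).idxOf l'[j] = s.length + j := by
    intro j hj
    have hlt : s.length + j < (s ++ l' ++ t).length := by
      simp [List.length_append]; omega
    have heq : (s ++ l' ++ t)[s.length + j]'hlt = l'[j] := by
      rw [List.getElem_append_left (by simp [List.length_append]; omega)]
      rw [List.getElem_append_right (by omega)]
      congr 1
      omega
    conv_lhs => rw [← heq]
    exact List.Nodup.idxOf_getElem hn _ _
  rw [show List.Chain' = List.IsChain from rfl, List.isChain_iff_getElem]
  intro i hi
  simp only [List.length_map] at hi
  simp only [List.get_eq_getElem, List.getElem_map]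
  rw [key i (by omega), key (i + 1) (by omega)]
  omega

theorem exists_nonadj {V : Type*} (G : SimpleGraph V) (hnc : G ≠ ⊤) :
    ∃ u v : V, u ≠ v ∧ ¬ G.Adj u v := by
  by_contra h
  push_neg at h
  apply hnc
  ext u v
  simp only [SimpleGraph.top_adj]
  exact ⟨G.ne_of_adj, h u v⟩

/-- If a graph is not complete and has a Hamiltonian path, then its proper connection number
equals 2. -/
theorem pc_eq_two_of_not_complete_hamiltonian_path {V : Type*} [Fintype V] [DecidableEq V]
    (G : SimpleGraph V) (hnc : G ≠ ⊤)
    (hham : ∃ (u v : V) (p : G.Walk u v), p.IsHamiltonian) :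
    properConnectionNumber G = 2 := by
  obtain ⟨a, b, hab, hnadj⟩ := exists_nonadj G hnc
  obtain ⟨u, v, p, hp⟩ := hham
  have hpath : p.IsPath := hp.isPath
  have hnodup : p.edges.Nodup := hpath.edges_nodup
  set c : Sym2 V → ℕ := fun e => p.edges.idxOf e % 2 with hc
  have hmem2 : 2 ∈ {k | ∃ c : Sym2 V → ℕ, (∀ e, c e < k) ∧ IsProperPathColoring G c} := by
    refine ⟨c, fun e => Nat.mod_lt _ (by norm_num), ?_⟩
    intro x y hxy
    have hx : x ∈ p.support := hp.mem_support x
    have hy : y ∈ p.support := hp.mem_support y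
    -- split p at y
    have hsplit := p.take_spec hy
    have hx' : x ∈ (p.takeUntil y hy).support ∨ x ∈ (p.dropUntil y hy).support := by
      rw [← SimpleGraph.Walk.mem_support_append_iff, hsplit]; exact hx
    have hedges : p.edges = (p.takeUntil y hy).edges ++ (p.dropUntil y hy).edges := by
      rw [← SimpleGraph.Walk.edges_append, hsplit]
    rcases hx' with hx1 | hx2
    · -- x occurs before y
      set w1 := p.takeUntil y hy with hw1
      refine ⟨w1.dropUntil x hx1, (hpath.takeUntil hy).dropUntil hx1, ?_⟩
      have hinfix : (w1.dropUntil x hx1).edges <:+: p.edges := by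
        refine ⟨(w1.takeUntil x hx1).edges, (p.dropUntil y hy).edges, ?_⟩
        have hw : w1.edges = (w1.takeUntil x hx1).edges ++ (w1.dropUntil x hx1).edges := by
          rw [← SimpleGraph.Walk.edges_append, w1.take_spec hx1]
        rw [hedges, hw, List.append_assoc]
      exact chain'_map_indexOf_mod_two hnodup hinfix
    · -- y occurs before x: walk from y to x, reversed
      set w2 := p.dropUntil y hy with hw2
      refine ⟨(w2.takeUntil x hx2).reverse, ((hpath.dropUntil hy).takeUntil hx2).reverse, ?_⟩
      have hinfix : (w2.takeUntil x hx2).edges <:+: p.edges := by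
        refine ⟨(p.takeUntil y hy).edges, (w2.dropUntil x hx2).edges, ?_⟩
        have hw : w2.edges = (w2.takeUntil x hx2).edges ++ (w2.dropUntil x hx2).edges := by
          rw [← SimpleGraph.Walk.edges_append, w2.take_spec hx2]
        rw [hedges, hw, List.append_assoc]
      have := chain'_map_indexOf_mod_two hnodup hinfix
      rw [SimpleGraph.Walk.edges_reverse, List.map_reverse, show List.Chain' = List.IsChain from rfl, List.isChain_reverse]
      exact this.imp fun a b h => h.symm
  apply le_antisymm
  · exact Nat.sInf_le hmem2
  · refine le_csInf ⟨2, hmem2⟩ ?_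
    rintro k ⟨c', hlt, hppc⟩
    by_contra hk
    interval_cases k
    · exact absurd (hlt s(a, b)) (by omega)
    · obtain ⟨q, hq, hchain⟩ := hppc a b hab
      have hall : ∀ e, c' e = 0 := fun e => by have := hlt e; omega
      cases q with
      | nil => exact hab rfl
      | cons h q' =>
        cases q' with
        | nil => exact hnadj h
        | cons h' q'' =>
          simp only [SimpleGraph.Walk.edges_cons, List.map_cons, List.isChain_cons_cons, hall] at hchain
          exact (List.isChain_cons_cons.1 hchain).1 rfl
end

section
/- Let α : ℕ → ℝ satisfy α(n) → +∞ and α(n) = o(log n), and let p(n) = (log n + α(n))/n. Then with high probability the Erdős–Rényi random graph G(n, p(n)) has at most n^{0.1} small vertices; that is, the probability that the number of vertices of G(n,p(n)) of degree less than (log n)/100 is at most n^{0.1} tends to 1 as n tends to infinity. -/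
open Finset SimpleGraph
open scoped Nat

/-! ### Auxiliary combinatorial lemmas -/

lemma er_sum_weights {β : Type*} [DecidableEq β] (s : Finset β) (p : ℝ) :
    ∑ t ∈ s.powerset, p ^ t.card * (1 - p) ^ (s.card - t.card) = 1 := by
  have h : ∑ t ∈ s.powerset, p ^ t.card * (1 - p) ^ (s.card - t.card)
      = ∏ _i ∈ s, (p + (1 - p)) := by
    rw [Finset.prod_add]
    refine Finset.sum_congr rfl fun t ht => ?_
    rw [Finset.prod_const, Finset.prod_const, Finset.card_sdiff_of_subset (Finset.mem_powerset.mp ht)]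
  rw [h]
  simp

lemma er_sum_powerset_union {β : Type*} [DecidableEq β] {s t : Finset β} (h : Disjoint s t)
    (f : Finset β → ℝ) :
    ∑ u ∈ (s ∪ t).powerset, f u = ∑ a ∈ s.powerset, ∑ b ∈ t.powerset, f (a ∪ b) := by
  rw [← Finset.sum_product']
  refine Finset.sum_bij' (fun u _ => (u ∩ s, u ∩ t)) (fun q _ => q.1 ∪ q.2)
    (fun u hu => ?_) (fun q hq => ?_) (fun u hu => ?_) (fun q hq => ?_) (fun u hu => ?_)
  · exact Finset.mem_product.mpr ⟨Finset.mem_powerset.mpr inter_subset_right,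
      Finset.mem_powerset.mpr inter_subset_right⟩
  · rw [Finset.mem_product] at hq
    exact Finset.mem_powerset.mpr (Finset.union_subset_union
      (Finset.mem_powerset.mp hq.1) (Finset.mem_powerset.mp hq.2))
  · show u ∩ s ∪ u ∩ t = u
    rw [← Finset.inter_union_distrib_left]
    exact Finset.inter_eq_left.mpr (Finset.mem_powerset.mp hu)
  · rw [Finset.mem_product] at hq
    have h1 := Finset.mem_powerset.mp hq.1
    have h2 := Finset.mem_powerset.mp hq.2
    have e1 : (q.1 ∪ q.2) ∩ s = q.1 := by
      rw [Finset.union_inter_distrib_right, Finset.inter_eq_left.mpr h1,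
        Finset.disjoint_iff_inter_eq_empty.mp (h.symm.mono_left h2)]
      exact Finset.union_empty _
    have e2 : (q.1 ∪ q.2) ∩ t = q.2 := by
      rw [Finset.union_inter_distrib_right, Finset.inter_eq_left.mpr h2,
        Finset.disjoint_iff_inter_eq_empty.mp (h.mono_left h1)]
      exact Finset.empty_union _
    exact Prod.ext e1 e2
  · simp only []
    congr 1
    rw [← Finset.inter_union_distrib_left]
    exact (Finset.inter_eq_left.mpr (Finset.mem_powerset.mp hu)).symm

open Classical in
lemma er_edgeFinset_fromEdgeSet (n : ℕ) (S : Finset (Sym2 (Fin n)))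
    [inst : Fintype (SimpleGraph.fromEdgeSet (↑S : Set (Sym2 (Fin n)))).edgeSet]
    (hS : S ∈ (⊤ : SimpleGraph (Fin n)).edgeFinset.powerset) :
    (SimpleGraph.fromEdgeSet (↑S : Set (Sym2 (Fin n)))).edgeFinset = S := by
  apply Finset.coe_injective
  rw [coe_edgeFinset, edgeSet_fromEdgeSet]
  ext e
  simp only [Set.mem_diff, Finset.mem_coe, Set.mem_setOf_eq]
  constructor
  · exact fun h => h.1
  · intro he
    refine ⟨he, ?_⟩
    have := Finset.mem_powerset.mp hS he
    rw [mem_edgeFinset, edgeSet_top] at this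
    exact this

open Classical in
lemma er_neighbor_ncard (n : ℕ) (S : Finset (Sym2 (Fin n)))
    (hS : S ∈ (⊤ : SimpleGraph (Fin n)).edgeFinset.powerset) (v : Fin n) :
    ((SimpleGraph.fromEdgeSet (↑S : Set (Sym2 (Fin n)))).neighborSet v).ncard
      = (S.filter (fun e => v ∈ e)).card := by
  set G := SimpleGraph.fromEdgeSet (↑S : Set (Sym2 (Fin n))) with hG
  have h1 : G.neighborSet v = ↑(G.neighborFinset v) := by
    ext u; simp [SimpleGraph.mem_neighborFinset]
  rw [h1, Set.ncard_coe_finset, SimpleGraph.card_neighborFinset_eq_degree,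
    ← SimpleGraph.card_incidenceFinset_eq_degree, SimpleGraph.incidenceFinset_eq_filter,
    er_edgeFinset_fromEdgeSet n S hS]

/-! ### Factorial estimates -/

lemma er_factorial_le {j K : ℕ} (h : j ≤ K) : K ! ≤ j ! * K ^ (K - j) := by
  induction K, h using Nat.le_induction with
  | base => simp
  | succ K hjK ih =>
    calc (K+1)! = (K+1) * K ! := Nat.factorial_succ K
      _ ≤ (K+1) * (j ! * K ^ (K-j)) := Nat.mul_le_mul_left _ ih
      _ ≤ (K+1) * (j ! * (K+1) ^ (K-j)) :=
          Nat.mul_le_mul_left _ (Nat.mul_le_mul_left _ (Nat.pow_le_pow_left (Nat.le_succ K) _))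
      _ = j ! * (K+1) ^ ((K-j)+1) := by ring
      _ = j ! * (K+1) ^ (K+1-j) := by rw [show K+1-j = (K-j)+1 by omega]

lemma er_pow_div_factorial_mono {x : ℝ} {j K : ℕ} (hj : j ≤ K) (hx : (K:ℝ) ≤ x) :
    x ^ j / j ! ≤ x ^ K / K ! := by
  have hx0 : 0 ≤ x := le_trans (Nat.cast_nonneg K) hx
  rw [div_le_div_iff₀ (by positivity) (by positivity)]
  have h1 : (K ! : ℝ) ≤ (j ! : ℝ) * (K:ℝ) ^ (K - j) := by exact_mod_cast er_factorial_le hj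
  calc x^j * K ! ≤ x^j * ((j ! : ℝ) * (K:ℝ)^(K-j)) := by
        exact mul_le_mul_of_nonneg_left h1 (by positivity)
    _ ≤ x^j * ((j ! : ℝ) * x^(K-j)) := by
        have := pow_le_pow_left₀ (Nat.cast_nonneg K) hx (K - j)
        exact mul_le_mul_of_nonneg_left (mul_le_mul_of_nonneg_left this (by positivity))
          (by positivity)
    _ = x^K * j ! := by rw [mul_comm ((j:ℕ)! : ℝ) _, ← mul_assoc, ← pow_add,
        show j + (K-j) = K from by omega]

lemma er_pow_self_le_exp (K : ℕ) : ((K:ℝ)) ^ K / K ! ≤ Real.exp K := by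
  calc ((K:ℝ))^K / K ! ≤ ∑ i ∈ Finset.range (K+1), (K:ℝ)^i / i ! :=
      Finset.single_le_sum (f := fun i => (K:ℝ)^i / i !) (fun i _ => by positivity)
        (Finset.self_mem_range_succ K)
    _ ≤ Real.exp K := Real.sum_le_exp_of_nonneg (Nat.cast_nonneg K) _

/-! ### The binomial tail bound -/

lemma er_T_bound (n K : ℕ) (p : ℝ) (hp0 : 0 ≤ p) (hp1 : p ≤ 1)
    (hKx : (K:ℝ) ≤ (n:ℝ) * p * Real.exp p) (hxK : (n:ℝ) * p * Real.exp p ≤ Real.exp 5 * K)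
    (hKn : K ≤ n - 1) (hn : 1 ≤ n) :
    ∑ j ∈ Finset.range K, ((n-1).choose j : ℝ) * p ^ j * (1-p) ^ (n-1-j)
      ≤ (K:ℝ) * Real.exp (6*K) * Real.exp (-(p * ((n:ℝ) - 1))) := by
  set x := (n:ℝ) * p * Real.exp p with hxdef
  have hx0 : 0 ≤ x := by positivity
  have h1p : 0 ≤ 1 - p := by linarith
  have hcast : ((n-1 : ℕ) : ℝ) = (n:ℝ) - 1 := by
    rw [Nat.cast_sub hn, Nat.cast_one]
  have hterm : ∀ j ∈ Finset.range K, ((n-1).choose j : ℝ) * p ^ j * (1-p) ^ (n-1-j)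
      ≤ x ^ j / j ! * Real.exp (-(p * ((n:ℝ) - 1))) := by
    intro j hj
    have hjK : j ≤ K := le_of_lt (Finset.mem_range.mp hj)
    have hjn : j ≤ n - 1 := le_trans hjK hKn
    have hchoose : ((n-1).choose j : ℝ) * p ^ j ≤ ((n:ℝ) * p) ^ j / j ! := by
      have hnat : (n-1).choose j * j ! ≤ n ^ j := by
        rw [mul_comm, ← Nat.descFactorial_eq_factorial_mul_choose]
        exact le_trans (Nat.descFactorial_le_pow _ _) (Nat.pow_le_pow_left (Nat.sub_le n 1) j)
      have hnat' : ((n-1).choose j : ℝ) * (j ! : ℝ) ≤ (n:ℝ) ^ j := by exact_mod_cast hnat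
      rw [mul_pow, le_div_iff₀ (by positivity)]
      calc ((n-1).choose j : ℝ) * p ^ j * j !
          = ((n-1).choose j : ℝ) * (j ! : ℝ) * p ^ j := by ring
        _ ≤ (n:ℝ)^j * p ^ j := mul_le_mul_of_nonneg_right hnat' (by positivity)
    have hgeom : (1-p) ^ (n-1-j) ≤ Real.exp p ^ j * Real.exp (-(p * ((n:ℝ) - 1))) := by
      have hle : (1-p) ≤ Real.exp (-p) := by
        have := Real.add_one_le_exp (-p)
        linarith
      have h2 : (1-p) ^ (n-1-j) ≤ Real.exp (-p) ^ (n-1-j) := pow_le_pow_left₀ h1p hle _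

      have h3 : Real.exp (-p) ^ (n-1-j) = Real.exp (-(p * ((n-1-j : ℕ) : ℝ))) := by
        rw [← Real.exp_nat_mul]
        ring_nf
      have h4 : ((n-1-j : ℕ) : ℝ) = (n:ℝ) - 1 - j := by
        rw [Nat.cast_sub hjn, hcast]
      refine h2.trans ?_
      rw [h3, h4]
      have h5 : -(p * ((n:ℝ) - 1 - j)) = (j:ℝ) * p + -(p * ((n:ℝ) - 1)) := by ring
      rw [h5, Real.exp_add, Real.exp_nat_mul]
    calc ((n-1).choose j : ℝ) * p ^ j * (1-p) ^ (n-1-j)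
        ≤ (((n:ℝ) * p) ^ j / j !) * (Real.exp p ^ j * Real.exp (-(p * ((n:ℝ) - 1)))) := by
          apply mul_le_mul hchoose hgeom (by positivity)
          positivity
      _ = x ^ j / j ! * Real.exp (-(p * ((n:ℝ) - 1))) := by
          rw [hxdef, mul_pow ((n:ℝ) * p) (Real.exp p) j]
          ring
  have hmono : ∀ j ∈ Finset.range K, x ^ j / j ! * Real.exp (-(p * ((n:ℝ) - 1)))
      ≤ x ^ K / K ! * Real.exp (-(p * ((n:ℝ) - 1))) := fun j hj =>
    mul_le_mul_of_nonneg_right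
      (er_pow_div_factorial_mono (le_of_lt (Finset.mem_range.mp hj)) hKx) (Real.exp_nonneg _)
  have hxk : x ^ K / K ! ≤ Real.exp (6*K) := by
    have h6 : x ^ K ≤ (Real.exp 5) ^ K * ((K:ℝ) ^ K) := by
      calc x ^ K ≤ (Real.exp 5 * K) ^ K := pow_le_pow_left₀ hx0 hxK K
        _ = (Real.exp 5) ^ K * ((K:ℝ) ^ K) := mul_pow _ _ _
    have hf0 : (0:ℝ) < (K ! : ℝ) := by positivity
    calc x ^ K / K ! ≤ (Real.exp 5) ^ K * ((K:ℝ) ^ K) / K ! := by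
          gcongr
      _ = (Real.exp 5) ^ K * (((K:ℝ) ^ K) / K !) := by ring
      _ ≤ (Real.exp 5) ^ K * Real.exp K :=
          mul_le_mul_of_nonneg_left (er_pow_self_le_exp K) (by positivity)
      _ = Real.exp (6*K) := by
          rw [← Real.exp_nat_mul]
          rw [← Real.exp_add]
          congr 1
          push_cast
          ring
  calc ∑ j ∈ Finset.range K, ((n-1).choose j : ℝ) * p ^ j * (1-p) ^ (n-1-j)
      ≤ ∑ _j ∈ Finset.range K, x ^ K / K ! * Real.exp (-(p * ((n:ℝ) - 1))) :=
        Finset.sum_le_sum (fun j hj => le_trans (hterm j hj) (hmono j hj))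
    _ = (K:ℝ) * (x ^ K / K ! * Real.exp (-(p * ((n:ℝ) - 1)))) := by
        rw [Finset.sum_const, Finset.card_range, nsmul_eq_mul]
    _ ≤ (K:ℝ) * (Real.exp (6*K) * Real.exp (-(p * ((n:ℝ) - 1)))) := by
        apply mul_le_mul_of_nonneg_left _ (Nat.cast_nonneg K)
        exact mul_le_mul_of_nonneg_right hxk (Real.exp_nonneg _)
    _ = (K:ℝ) * Real.exp (6*K) * Real.exp (-(p * ((n:ℝ) - 1))) := by ring


open Classical in
/-- The probability that the Erdős–Rényi random graph `G(n,p)` lies in the event `A`: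
each graph `G` on `Fin n` has probability `p^(#edges of G) * (1-p)^((n choose 2) - #edges of G)`. -/
noncomputable def erProb (n : ℕ) (p : ℝ) (A : Set (SimpleGraph (Fin n))) : ℝ :=
  ∑ G : SimpleGraph (Fin n),
    if G ∈ A then p ^ G.edgeSet.ncard * (1 - p) ^ (n.choose 2 - G.edgeSet.ncard) else 0

open Classical in
lemma erProb_eq (n : ℕ) (p : ℝ) (A : Set (SimpleGraph (Fin n))) :
    erProb n p A
    = ∑ S ∈ (⊤ : SimpleGraph (Fin n)).edgeFinset.powerset,
      if SimpleGraph.fromEdgeSet ↑S ∈ A then p ^ S.card * (1 - p) ^ (n.choose 2 - S.card)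
      else 0 := by
  rw [erProb]
  refine Finset.sum_bij' (fun G _ => G.edgeFinset) (fun S _ => SimpleGraph.fromEdgeSet ↑S)
    (fun G _ => ?_) (fun S _ => Finset.mem_univ _) (fun G _ => ?_) (fun S hS => ?_)
    (fun G _ => ?_)
  · exact Finset.mem_powerset.mpr (edgeFinset_mono le_top)
  · rw [coe_edgeFinset, fromEdgeSet_edgeSet]
  · convert er_edgeFinset_fromEdgeSet n S hS
  · have h1 : SimpleGraph.fromEdgeSet (↑G.edgeFinset : Set (Sym2 (Fin n))) = G := by
      rw [coe_edgeFinset, fromEdgeSet_edgeSet]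
    have h2 : G.edgeSet.ncard = G.edgeFinset.card := by
      rw [← coe_edgeFinset, Set.ncard_coe_finset]
    rw [h1, h2]

open Classical in
lemma erProb_le_one (n : ℕ) (p : ℝ) (hp0 : 0 ≤ p) (hp1 : p ≤ 1)
    (A : Set (SimpleGraph (Fin n))) : erProb n p A ≤ 1 := by
  rw [erProb_eq]
  set U := (⊤ : SimpleGraph (Fin n)).edgeFinset with hU
  have hUcard : U.card = n.choose 2 := by
    rw [hU, SimpleGraph.card_edgeFinset_top_eq_card_choose_two, Fintype.card_fin]
  have htot : ∑ S ∈ U.powerset, p ^ S.card * (1 - p) ^ (n.choose 2 - S.card) = 1 := by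
    have h := er_sum_weights U p
    simp only [hUcard] at h
    exact h
  calc ∑ S ∈ U.powerset,
      (if SimpleGraph.fromEdgeSet ↑S ∈ A then p ^ S.card * (1 - p) ^ (n.choose 2 - S.card) else 0)
      ≤ ∑ S ∈ U.powerset, p ^ S.card * (1 - p) ^ (n.choose 2 - S.card) := by
        refine Finset.sum_le_sum fun S _ => ?_
        split
        · exact le_refl _
        · exact mul_nonneg (pow_nonneg hp0 _) (pow_nonneg (by linarith) _)
    _ = 1 := htot
set_option maxHeartbeats 1000000 in
open Classical in
lemma er_vertex_sum (n : ℕ) (p : ℝ) (hp0 : 0 ≤ p) (hp1 : p ≤ 1) (K : ℕ) (v : Fin n) :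
    ∑ S ∈ (⊤ : SimpleGraph (Fin n)).edgeFinset.powerset,
      (if (S.filter (fun e => v ∈ e)).card < K then
        p ^ S.card * (1 - p) ^ (n.choose 2 - S.card) else 0)
    ≤ ∑ j ∈ Finset.range K, ((n - 1).choose j : ℝ) * p ^ j * (1 - p) ^ (n - 1 - j) := by
  set U := (⊤ : SimpleGraph (Fin n)).edgeFinset with hU
  have hUcard : U.card = n.choose 2 := by
    rw [hU, SimpleGraph.card_edgeFinset_top_eq_card_choose_two, Fintype.card_fin]
  set P : Sym2 (Fin n) → Prop := fun e => v ∈ e with hP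
  set Uv := U.filter P with hUv
  set Uc := U.filter (fun e => ¬ P e) with hUc
  have hdisj : Disjoint Uv Uc := Finset.disjoint_filter_filter_not U U P
  have hunion : Uv ∪ Uc = U := Finset.filter_union_filter_not_eq P U
  have hm1 : Uv.card = n - 1 := by
    have h1 : Uv = (⊤ : SimpleGraph (Fin n)).incidenceFinset v :=
      (SimpleGraph.incidenceFinset_eq_filter _ _).symm
    rw [h1, SimpleGraph.card_incidenceFinset_eq_degree, SimpleGraph.complete_graph_degree,
      Fintype.card_fin]
  have hm2 : Uv.card + Uc.card = n.choose 2 := by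
    rw [← hUcard, ← Finset.card_union_of_disjoint hdisj, hunion]
  have key : ∑ S ∈ U.powerset,
      (if (S.filter P).card < K then p ^ S.card * (1 - p) ^ (n.choose 2 - S.card) else 0)
      = ∑ a ∈ Uv.powerset,
        (if a.card < K then p ^ a.card * (1 - p) ^ (Uv.card - a.card) else 0) := by
    rw [← hunion, er_sum_powerset_union hdisj]
    refine Finset.sum_congr rfl fun a ha => ?_
    have ha' := Finset.mem_powerset.mp ha
    have hfa : ∀ b ∈ Uc.powerset,
        ((a ∪ b).filter P).card = a.card ∧ (a ∪ b).card = a.card + b.card ∧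
          n.choose 2 - (a ∪ b).card = (Uv.card - a.card) + (Uc.card - b.card) := by
      intro b hb
      have hb' := Finset.mem_powerset.mp hb
      have hfilter : (a ∪ b).filter P = a := by
        rw [Finset.filter_union]
        rw [Finset.filter_eq_self.mpr fun e he => (Finset.mem_filter.mp (ha' he)).2,
          Finset.filter_eq_empty_iff.mpr fun e he => (Finset.mem_filter.mp (hb' he)).2]
        exact Finset.union_empty _
      have hdisjab : Disjoint a b := hdisj.mono ha' hb'
      have hcard : (a ∪ b).card = a.card + b.card := Finset.card_union_of_disjoint hdisjab
      have hle1 : a.card ≤ Uv.card := Finset.card_le_card ha'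
      have hle2 : b.card ≤ Uc.card := Finset.card_le_card hb'
      exact ⟨by rw [hfilter], hcard, by omega⟩
    calc ∑ b ∈ Uc.powerset,
        (if ((a ∪ b).filter P).card < K then p ^ (a ∪ b).card * (1-p) ^ (n.choose 2 - (a ∪ b).card) else 0)
        = ∑ b ∈ Uc.powerset,
          (if a.card < K then p ^ a.card * (1-p) ^ (Uv.card - a.card) else 0) *
            (p ^ b.card * (1-p) ^ (Uc.card - b.card)) := by
          refine Finset.sum_congr rfl fun b hb => ?_
          obtain ⟨h1, h2, h3⟩ := hfa b hb
          rw [h1, h3, h2]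
          by_cases hc : a.card < K
          · rw [if_pos hc, if_pos hc, pow_add, pow_add]; ring
          · rw [if_neg hc, if_neg hc, zero_mul]
      _ = (if a.card < K then p ^ a.card * (1-p) ^ (Uv.card - a.card) else 0) := by
          rw [← Finset.mul_sum, er_sum_weights, mul_one]
  rw [key]
  have key2 : ∑ a ∈ Uv.powerset,
      (if a.card < K then p ^ a.card * (1 - p) ^ (Uv.card - a.card) else 0)
      = ∑ j ∈ Finset.range (Uv.card + 1),
        (Uv.card).choose j • (if j < K then p ^ j * (1 - p) ^ (Uv.card - j) else 0) :=
    Finset.sum_powerset_apply_card (fun j => if j < K then p ^ j * (1 - p) ^ (Uv.card - j) else 0)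
  rw [key2]
  have h1p : (0:ℝ) ≤ 1 - p := by linarith
  calc ∑ j ∈ Finset.range (Uv.card + 1),
      (Uv.card).choose j • (if j < K then p ^ j * (1 - p) ^ (Uv.card - j) else 0)
      = ∑ j ∈ (Finset.range (Uv.card + 1)).filter (· < K),
        ((Uv.card).choose j : ℝ) * (p ^ j * (1 - p) ^ (Uv.card - j)) := by
        rw [Finset.sum_filter]
        refine Finset.sum_congr rfl fun j _ => ?_
        rw [nsmul_eq_mul, mul_ite, mul_zero]
    _ ≤ ∑ j ∈ Finset.range K, ((Uv.card).choose j : ℝ) * (p ^ j * (1 - p) ^ (Uv.card - j)) := by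
        refine Finset.sum_le_sum_of_subset_of_nonneg ?_ ?_
        · intro j hj
          rw [Finset.mem_filter] at hj
          exact Finset.mem_range.mpr hj.2
        · intro j _ _
          positivity
    _ = ∑ j ∈ Finset.range K, ((n - 1).choose j : ℝ) * p ^ j * (1 - p) ^ (n - 1 - j) := by
        rw [hm1]; refine Finset.sum_congr rfl fun j _ => by ring

set_option maxHeartbeats 1000000 in
open Classical in
lemma er_one_sub_le (n : ℕ) (p : ℝ) (hp0 : 0 ≤ p) (hp1 : p ≤ 1) (K : ℕ) (t : ℝ) (ht : 0 < t)
    (hK : ∀ d : ℕ, ((d:ℝ) < Real.log n / 100 ↔ d < K)) :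
    1 - erProb n p {G | (({v : Fin n |
        ((G.neighborSet v).ncard : ℝ) < Real.log n / 100}).ncard : ℝ) ≤ t}
      ≤ (n:ℝ) / t * ∑ j ∈ Finset.range K, ((n-1).choose j : ℝ) * p ^ j * (1-p) ^ (n-1-j) := by
  have h1p : (0:ℝ) ≤ 1 - p := by linarith
  set A : Set (SimpleGraph (Fin n)) := {G | (({v : Fin n |
      ((G.neighborSet v).ncard : ℝ) < Real.log n / 100}).ncard : ℝ) ≤ t} with hA
  set T := ∑ j ∈ Finset.range K, ((n-1).choose j : ℝ) * p ^ j * (1-p) ^ (n-1-j) with hT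
  rw [erProb_eq]
  set U := (⊤ : SimpleGraph (Fin n)).edgeFinset with hU
  have hUcard : U.card = n.choose 2 := by
    rw [hU, SimpleGraph.card_edgeFinset_top_eq_card_choose_two, Fintype.card_fin]
  set w : Finset (Sym2 (Fin n)) → ℝ := fun S => p ^ S.card * (1 - p) ^ (n.choose 2 - S.card)
    with hw
  have hw0 : ∀ S, 0 ≤ w S := fun S => mul_nonneg (pow_nonneg hp0 _) (pow_nonneg h1p _)
  have htot : ∑ S ∈ U.powerset, w S = 1 := by
    have h := er_sum_weights U p
    simp only [hUcard] at h
    exact h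
  set X : Finset (Sym2 (Fin n)) → ℕ :=
    fun S => (Finset.univ.filter (fun v : Fin n => (S.filter (fun e => v ∈ e)).card < K)).card
    with hX
  have hset : ∀ S ∈ U.powerset,
      ({v : Fin n | (((SimpleGraph.fromEdgeSet (↑S : Set (Sym2 (Fin n)))).neighborSet v).ncard : ℝ)
        < Real.log n / 100}).ncard = X S := by
    intro S hS
    have hXcoe : {v : Fin n |
        (((SimpleGraph.fromEdgeSet (↑S : Set (Sym2 (Fin n)))).neighborSet v).ncard : ℝ)
          < Real.log n / 100}
        = ↑(Finset.univ.filter (fun v : Fin n => (S.filter (fun e => v ∈ e)).card < K)) := by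
      ext u
      simp only [Set.mem_setOf_eq, Finset.coe_filter, Finset.mem_univ, true_and]
      rw [er_neighbor_ncard n S hS u]
      exact hK _
    rw [hXcoe, Set.ncard_coe_finset]
  have hXsum : ∀ S, ((X S : ℝ))
      = ∑ v : Fin n, (if (S.filter (fun e => v ∈ e)).card < K then (1:ℝ) else 0) := by
    intro S
    show ((Finset.univ.filter (fun v : Fin n => (S.filter (fun e => v ∈ e)).card < K)).card : ℝ) = _
    rw [Finset.card_filter]
    push_cast
    exact Finset.sum_congr rfl fun v _ => by split <;> norm_num
  calc 1 - ∑ S ∈ U.powerset,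
      (if SimpleGraph.fromEdgeSet (↑S : Set (Sym2 (Fin n))) ∈ A then w S else 0)
      = ∑ S ∈ U.powerset,
        (w S - if SimpleGraph.fromEdgeSet (↑S : Set (Sym2 (Fin n))) ∈ A then w S else 0) := by
        rw [Finset.sum_sub_distrib, htot]
    _ ≤ ∑ S ∈ U.powerset, w S * (X S / t) := by
        refine Finset.sum_le_sum fun S hS => ?_
        by_cases hc : SimpleGraph.fromEdgeSet (↑S : Set (Sym2 (Fin n))) ∈ A
        · rw [if_pos hc, sub_self]
          have := hw0 S
          positivity
        · rw [if_neg hc, sub_zero]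
          have hXt : t < (X S : ℝ) := by
            rw [hA, Set.mem_setOf_eq, not_le, hset S hS] at hc
            exact hc
          exact le_mul_of_one_le_right (hw0 S) ((one_le_div ht).mpr (le_of_lt hXt))
    _ = (1/t) * ∑ S ∈ U.powerset, w S * (X S : ℝ) := by
        rw [Finset.mul_sum]
        exact Finset.sum_congr rfl fun S _ => by ring
    _ ≤ (1/t) * ((n:ℝ) * T) := by
        refine mul_le_mul_of_nonneg_left ?_ (by positivity)
        calc ∑ S ∈ U.powerset, w S * (X S : ℝ)
            = ∑ v : Fin n, ∑ S ∈ U.powerset,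
              (if (S.filter (fun e => v ∈ e)).card < K then w S else 0) := by
              rw [← Finset.sum_comm]
              refine Finset.sum_congr rfl fun S _ => ?_
              rw [hXsum S, Finset.mul_sum]
              exact Finset.sum_congr rfl fun v _ => by split <;> simp
          _ ≤ ∑ _v : Fin n, T := by
              refine Finset.sum_le_sum fun v _ => ?_
              exact er_vertex_sum n p hp0 hp1 K v
          _ = (n:ℝ) * T := by
              rw [Finset.sum_const, Finset.card_univ, Fintype.card_fin, nsmul_eq_mul]
    _ = (n:ℝ)/t * T := by ring


set_option maxHeartbeats 1000000 in
/-- If `α n → +∞`, `α n = o(log n)`, and `p n = (log n + α n) / n`, then w.h.p. the number of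
small vertices (those of degree less than `(log n)/100`) in `G(n, p n)` is at most `n^0.1`. -/
theorem er_few_small_vertices_whp (α : ℕ → ℝ) (hα : Filter.Tendsto α Filter.atTop Filter.atTop)
    (hαo : Filter.Tendsto (fun n : ℕ => α n / Real.log n) Filter.atTop (nhds 0)) :
    Filter.Tendsto
      (fun n : ℕ => erProb n ((Real.log n + α n) / n)
        {G | (({v : Fin n | ((G.neighborSet v).ncard : ℝ) < Real.log n / 100}).ncard : ℝ)
          ≤ (n : ℝ) ^ (0.1 : ℝ)})
      Filter.atTop (nhds 1) := by
  have hlog : Filter.Tendsto (fun n : ℕ => Real.log n) Filter.atTop Filter.atTop :=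
    Real.tendsto_log_atTop.comp tendsto_natCast_atTop_atTop
  set g : ℕ → ℝ := fun n => Real.exp 7 * (Real.log n * Real.exp (-(0.04 * Real.log n))) with hg
  have hgto : Filter.Tendsto g Filter.atTop (nhds 0) := by
    have h1 : Filter.Tendsto (fun y : ℝ => y ^ 1 * Real.exp (-y)) Filter.atTop (nhds 0) :=
      Real.tendsto_pow_mul_exp_neg_atTop_nhds_zero 1
    have h2 : Filter.Tendsto (fun n : ℕ => 0.04 * Real.log n) Filter.atTop Filter.atTop :=
      hlog.const_mul_atTop (by norm_num)
    have h3 := h1.comp h2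
    have h4 : Filter.Tendsto
        (fun n : ℕ => (Real.exp 7 * 25) *
          ((0.04 * Real.log n) ^ 1 * Real.exp (-(0.04 * Real.log n))))
        Filter.atTop (nhds ((Real.exp 7 * 25) * 0)) := h3.const_mul _
    rw [mul_zero] at h4
    refine h4.congr fun n => ?_
    simp only [hg, pow_one]
    ring
  have hlow : Filter.Tendsto (fun n : ℕ => 1 - g n) Filter.atTop (nhds 1) := by
    simpa using
      ((tendsto_const_nhds : Filter.Tendsto (fun _ : ℕ => (1:ℝ)) Filter.atTop (nhds 1)).sub hgto)
  have main : ∀ᶠ n : ℕ in Filter.atTop,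
      1 - g n ≤ erProb n ((Real.log n + α n) / n)
        {G | (({v : Fin n | ((G.neighborSet v).ncard : ℝ) < Real.log n / 100}).ncard : ℝ)
          ≤ (n : ℝ) ^ (0.1 : ℝ)} ∧
      erProb n ((Real.log n + α n) / n)
        {G | (({v : Fin n | ((G.neighborSet v).ncard : ℝ) < Real.log n / 100}).ncard : ℝ)
          ≤ (n : ℝ) ^ (0.1 : ℝ)} ≤ 1 := by
    filter_upwards [hα.eventually_ge_atTop 0, hαo.eventually_lt_const (show (0:ℝ) < 1/100 by norm_num),
      hlog.eventually_ge_atTop 1000, tendsto_natCast_atTop_atTop.eventually_ge_atTop (40000 : ℝ)]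
      with n h1 h2 h3 h4
    set Ln := Real.log n with hLn
    have hn0 : (0:ℝ) < n := by linarith
    have hn1 : 1 ≤ n := by exact_mod_cast (show (1:ℝ) ≤ n by linarith)
    -- log n is much smaller than n
    have hsqrt0 : (0:ℝ) < Real.sqrt n := Real.sqrt_pos.mpr hn0
    have hlogsqrt : Ln = 2 * Real.log (Real.sqrt n) := by
      rw [Real.log_sqrt hn0.le]; ring
    have hlogle : Real.log (Real.sqrt n) ≤ Real.sqrt n := by
      have := Real.log_le_sub_one_of_pos hsqrt0
      linarith
    have hsn : (200:ℝ) ≤ Real.sqrt n := by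
      have h := Real.sqrt_le_sqrt h4
      rwa [show (40000:ℝ) = 200^2 by norm_num, Real.sqrt_sq (by norm_num)] at h
    have hmul : Real.sqrt n * Real.sqrt n = (n:ℝ) := Real.mul_self_sqrt hn0.le
    have hLn_n : 100 * Ln ≤ n := by nlinarith
    have hLpos : (0:ℝ) < Ln := by linarith
    have halpha : α n ≤ Ln / 100 := by
      have := (div_lt_iff₀ hLpos).mp h2
      linarith
    set p := (Real.log n + α n) / n with hp
    have hpn : p * n = Ln + α n := by
      rw [hp]; exact div_mul_cancel₀ _ hn0.ne'
    have hp0 : 0 ≤ p := div_nonneg (by linarith) hn0.le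
    have hpsmall : p ≤ 0.011 := by
      rw [hp, div_le_iff₀ hn0]
      nlinarith
    have hp1 : p ≤ 1 := by linarith
    have hexp_p : Real.exp p ≤ 1.1 := by
      have h := Real.add_one_le_exp (-p)
      have hepos : (0:ℝ) < Real.exp p := Real.exp_pos p
      have hinv : Real.exp p * Real.exp (-p) = 1 := by rw [← Real.exp_add]; simp
      nlinarith
    set K := Nat.ceil (Ln / 100) with hKdef
    have hKlow : Ln / 100 ≤ (K:ℝ) := Nat.le_ceil _
    have hKhigh : (K:ℝ) < Ln / 100 + 1 := Nat.ceil_lt_add_one (by positivity)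
    have hKiff : ∀ d : ℕ, ((d:ℝ) < Real.log n / 100 ↔ d < K) := fun d => (Nat.lt_ceil).symm
    have hKn : K ≤ n - 1 := by
      have hKRn : (K:ℝ) < (n:ℝ) - 1 := by linarith
      have hlt : K < n := by
        have : (K:ℝ) < (n:ℝ) := by linarith
        exact_mod_cast this
      omega
    have hexp1 : 1 ≤ Real.exp p := Real.one_le_exp hp0
    have hnp : (n:ℝ) * p = Ln + α n := by rw [mul_comm]; exact hpn
    have hKx : (K:ℝ) ≤ (n:ℝ) * p * Real.exp p := by
      have hmm : (Ln + α n) * 1 ≤ (Ln + α n) * Real.exp p :=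
        mul_le_mul_of_nonneg_left hexp1 (by linarith)
      rw [hnp]
      linarith
    have h121 : (121:ℝ) ≤ Real.exp 5 := by
      have he := Real.exp_one_gt_d9
      have h5 : Real.exp 1 ^ (5:ℕ) = Real.exp 5 := by
        rw [← Real.exp_nat_mul]; norm_num
      have h6 : (2.7:ℝ)^(5:ℕ) ≤ Real.exp 1 ^ (5:ℕ) :=
        pow_le_pow_left₀ (by norm_num) (by linarith) 5
      have h7 : (121:ℝ) ≤ (2.7:ℝ)^(5:ℕ) := by norm_num
      linarith
    have hxK : (n:ℝ) * p * Real.exp p ≤ Real.exp 5 * K := by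
      rw [hnp]
      have hb : (Ln + α n) * Real.exp p ≤ (1.01 * Ln) * 1.1 := by
        apply mul_le_mul (by linarith) hexp_p (Real.exp_nonneg p) (by linarith)
      have hc : (121:ℝ) * (Ln/100) ≤ 121 * K := by linarith
      have hd : (121:ℝ) * K ≤ Real.exp 5 * K :=
        mul_le_mul_of_nonneg_right h121 (Nat.cast_nonneg K)
      nlinarith
    have hT := er_T_bound n K p hp0 hp1 hKx hxK hKn hn1
    have ht : (0:ℝ) < (n:ℝ) ^ (0.1:ℝ) := Real.rpow_pos_of_pos hn0 _
    have hbound := er_one_sub_le n p hp0 hp1 K ((n:ℝ) ^ (0.1:ℝ)) ht hKiff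
    have hQ1 := erProb_le_one n p hp0 hp1
      {G : SimpleGraph (Fin n) | (({v : Fin n |
        ((G.neighborSet v).ncard : ℝ) < Real.log n / 100}).ncard : ℝ) ≤ (n : ℝ) ^ (0.1 : ℝ)}
    refine ⟨?_, hQ1⟩
    -- now the analytic estimate
    have hnt : (n:ℝ) / (n:ℝ) ^ (0.1:ℝ) = Real.exp (Ln - Ln * 0.1) := by
      have e2 : (n:ℝ)^(0.1:ℝ) = Real.exp (Ln * 0.1) := Real.rpow_def_of_pos hn0 _
      rw [e2, Real.exp_sub]
      congr 1
      exact (Real.exp_log hn0).symm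
    have hKLn : (K:ℝ) ≤ Ln := by linarith
    have h6K : (6:ℝ) * K ≤ 0.06 * Ln + 6 := by linarith
    have hpn1 : -(p * ((n:ℝ) - 1)) ≤ 1 - Ln := by
      have : p * ((n:ℝ) - 1) = p * n - p := by ring
      rw [this, hpn]
      linarith
    have hchain : (n:ℝ) / (n:ℝ) ^ (0.1:ℝ) *
        ((K:ℝ) * Real.exp (6*K) * Real.exp (-(p * ((n:ℝ) - 1))))
        ≤ Real.exp (Ln - Ln * 0.1) * (Ln * Real.exp (0.06 * Ln + 6) * Real.exp (1 - Ln)) := by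
      rw [hnt]
      have e1 : Real.exp (6*(K:ℝ)) ≤ Real.exp (0.06 * Ln + 6) := Real.exp_le_exp.mpr h6K
      have e2 : Real.exp (-(p * ((n:ℝ) - 1))) ≤ Real.exp (1 - Ln) := Real.exp_le_exp.mpr hpn1
      have hinner : (K:ℝ) * Real.exp (6*K) * Real.exp (-(p * ((n:ℝ) - 1)))
          ≤ Ln * Real.exp (0.06 * Ln + 6) * Real.exp (1 - Ln) := by
        apply mul_le_mul
        · exact mul_le_mul hKLn e1 (Real.exp_nonneg _) (by linarith)
        · exact e2
        · exact Real.exp_nonneg _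
        · positivity
      exact mul_le_mul_of_nonneg_left hinner (Real.exp_nonneg _)
    have hfinal : Real.exp (Ln - Ln * 0.1) * (Ln * Real.exp (0.06 * Ln + 6) * Real.exp (1 - Ln))
        = g n := by
      have hsplit : ∀ a b c : ℝ, Real.exp a * (Ln * Real.exp b * Real.exp c)
          = Ln * Real.exp (a + (b + c)) := by
        intro a b c
        rw [Real.exp_add, Real.exp_add]
        ring
      rw [hsplit, show (Ln - Ln * 0.1) + ((0.06 * Ln + 6) + (1 - Ln)) = 7 + -(0.04 * Ln) by ring,
        Real.exp_add]
      simp only [hg]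
      ring
    have hTge : (n:ℝ) / (n:ℝ) ^ (0.1:ℝ) *
        (∑ j ∈ Finset.range K, ((n-1).choose j : ℝ) * p ^ j * (1-p) ^ (n-1-j))
        ≤ g n := by
      calc (n:ℝ) / (n:ℝ) ^ (0.1:ℝ) *
          (∑ j ∈ Finset.range K, ((n-1).choose j : ℝ) * p ^ j * (1-p) ^ (n-1-j))
          ≤ (n:ℝ) / (n:ℝ) ^ (0.1:ℝ) *
            ((K:ℝ) * Real.exp (6*K) * Real.exp (-(p * ((n:ℝ) - 1)))) := by
            exact mul_le_mul_of_nonneg_left hT (by positivity)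
        _ ≤ Real.exp (Ln - Ln * 0.1) * (Ln * Real.exp (0.06 * Ln + 6) * Real.exp (1 - Ln)) :=
            hchain
        _ = g n := hfinal
    linarith [hbound.trans hTge]
  exact tendsto_of_tendsto_of_tendsto_of_le_of_le' hlow tendsto_const_nhds
    (main.mono fun n h => h.1) (main.mono fun n h => h.2)
end

section
/- Let α : ℕ → ℝ satisfy α(n) → +∞ and α(n) = o(log n), and let p(n) = (log n + α(n))/n. Then with high probability no two small vertices of the Erdős–Rényi random graph G(n, p(n)) are adjacent or share a common neighbor; that is, the probability that every pair of distinct vertices of G(n,p(n)) each having degree less than (log n)/100 is at graph distance greater than 2 tends to 1 as n tends to infinity. -/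
set_option linter.unusedSectionVars false
set_option maxHeartbeats 1000000
set_option linter.unusedVariables false
set_option linter.unnecessarySeqFocus false

open Finset

noncomputable section ERaux
open Classical

variable {β : Type*} [DecidableEq β]

/-- Weight of a subset `a` of the ground finset `S` in the Bernoulli(p) product measure. -/
def erWt (p : ℝ) (S a : Finset β) : ℝ := p ^ a.card * (1 - p) ^ (S.card - a.card)

/-- Probability of the event `P` under the Bernoulli(p) product measure on subsets of `S`. -/
def erMu (p : ℝ) (S : Finset β) (P : Finset β → Prop) : ℝ :=
  ∑ a ∈ S.powerset, if P a then erWt p S a else 0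

lemma erWt_nonneg {p : ℝ} (hp0 : 0 ≤ p) (hp1 : p ≤ 1) (S a : Finset β) :
    0 ≤ erWt p S a :=
  mul_nonneg (pow_nonneg hp0 _) (pow_nonneg (by linarith) _)

lemma sum_pow_wt (x y : ℝ) (S : Finset β) :
    ∑ a ∈ S.powerset, x ^ a.card * y ^ (S.card - a.card) = (x + y) ^ S.card := by
  have h := Finset.prod_add (fun _ : β => x) (fun _ : β => y) S
  simp only [Finset.prod_const] at h
  rw [h]
  exact Finset.sum_congr rfl fun t ht => by
    rw [Finset.card_sdiff_of_subset (Finset.mem_powerset.mp ht)]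

lemma erMu_true (p : ℝ) (S : Finset β) : erMu p S (fun _ => True) = 1 := by
  simp only [erMu, if_pos trivial, erWt]
  rw [sum_pow_wt]; simp

lemma erMu_nonneg {p : ℝ} (hp0 : 0 ≤ p) (hp1 : p ≤ 1) (S : Finset β)
    (P : Finset β → Prop) : 0 ≤ erMu p S P :=
  Finset.sum_nonneg fun a _ => by
    split
    · exact erWt_nonneg hp0 hp1 S a
    · exact le_refl _

lemma erMu_mono {p : ℝ} (hp0 : 0 ≤ p) (hp1 : p ≤ 1) (S : Finset β)
    {P Q : Finset β → Prop} (h : ∀ a, P a → Q a) : erMu p S P ≤ erMu p S Q := by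
  refine Finset.sum_le_sum fun a _ => ?_
  by_cases hP : P a
  · rw [if_pos hP, if_pos (h a hP)]
  · rw [if_neg hP]
    split
    · exact erWt_nonneg hp0 hp1 S a
    · exact le_refl _

lemma erMu_mono' {p : ℝ} (hp0 : 0 ≤ p) (hp1 : p ≤ 1) (S : Finset β)
    {P Q : Finset β → Prop} (h : ∀ a, a ⊆ S → P a → Q a) : erMu p S P ≤ erMu p S Q := by
  refine Finset.sum_le_sum fun a ha => ?_
  have haS := Finset.mem_powerset.mp ha
  by_cases hP : P a
  · rw [if_pos hP, if_pos (h a haS hP)]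
  · rw [if_neg hP]
    split
    · exact erWt_nonneg hp0 hp1 S a
    · exact le_refl _

lemma erMu_le_one {p : ℝ} (hp0 : 0 ≤ p) (hp1 : p ≤ 1) (S : Finset β)
    (P : Finset β → Prop) : erMu p S P ≤ 1 := by
  calc erMu p S P ≤ erMu p S (fun _ => True) := erMu_mono hp0 hp1 S (fun a _ => trivial)
  _ = 1 := erMu_true p S

lemma erMu_add_not (p : ℝ) (S : Finset β) (P : Finset β → Prop) :
    erMu p S P + erMu p S (fun a => ¬ P a) = 1 := by
  rw [← erMu_true p S, erMu, erMu, erMu, ← Finset.sum_add_distrib]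
  refine Finset.sum_congr rfl fun a _ => ?_
  by_cases hP : P a <;> simp [hP]

lemma erMu_or_le {p : ℝ} (hp0 : 0 ≤ p) (hp1 : p ≤ 1) (S : Finset β)
    (P Q : Finset β → Prop) :
    erMu p S (fun a => P a ∨ Q a) ≤ erMu p S P + erMu p S Q := by
  rw [erMu, erMu, erMu, ← Finset.sum_add_distrib]
  refine Finset.sum_le_sum fun a _ => ?_
  have hw := erWt_nonneg hp0 hp1 S a
  by_cases hP : P a <;> by_cases hQ : Q a <;> simp [hP, hQ] <;> linarith

lemma erMu_exists_le {ι : Type*} {p : ℝ} (hp0 : 0 ≤ p) (hp1 : p ≤ 1) (S : Finset β)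
    (I : Finset ι) (P : ι → Finset β → Prop) :
    erMu p S (fun t => ∃ i ∈ I, P i t) ≤ ∑ i ∈ I, erMu p S (P i) := by
  have : ∑ i ∈ I, erMu p S (P i)
      = ∑ a ∈ S.powerset, ∑ i ∈ I, (if P i a then erWt p S a else 0) := by
    rw [Finset.sum_comm]
    rfl
  rw [this, erMu]
  refine Finset.sum_le_sum fun a _ => ?_
  by_cases h : ∃ i ∈ I, P i a
  · rw [if_pos h]
    obtain ⟨i, hi, hPi⟩ := h
    calc erWt p S a = (if P i a then erWt p S a else 0) := (if_pos hPi).symm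
    _ ≤ ∑ i ∈ I, (if P i a then erWt p S a else 0) :=
      Finset.single_le_sum (f := fun i => if P i a then erWt p S a else 0)
        (fun j _ => by
          by_cases hj : P j a
          · simpa [hj] using erWt_nonneg hp0 hp1 S a
          · simp [hj]) hi
  · rw [if_neg h]
    exact Finset.sum_nonneg fun j _ => by
      split
      · exact erWt_nonneg hp0 hp1 S a
      · exact le_refl _


lemma erWt_split {p : ℝ} {S T t : Finset β} (hST : S ⊆ T) (ht : t ⊆ T) :
    erWt p T t = erWt p S (t ∩ S) * erWt p (T \ S) (t \ S) := by
  have hcard : t.card = (t ∩ S).card + (t \ S).card :=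
    (Finset.card_inter_add_card_sdiff t S).symm
  have h1 : (t ∩ S).card ≤ S.card := Finset.card_le_card (Finset.inter_subset_right)
  have h2 : (t \ S).card ≤ (T \ S).card :=
    Finset.card_le_card (Finset.sdiff_subset_sdiff ht (le_refl _))
  have h3 : (T \ S).card = T.card - S.card := Finset.card_sdiff_of_subset hST
  have h4 : S.card ≤ T.card := Finset.card_le_card hST
  have hexp : T.card - ((t ∩ S).card + (t \ S).card)
      = (S.card - (t ∩ S).card) + ((T \ S).card - (t \ S).card) := by
    omega
  rw [erWt, erWt, erWt, hcard, hexp, pow_add, pow_add]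
  ring

/-- Independence: if the event splits as a condition on `t ∩ S` and one on `t \ S`,
the measure factorizes. -/
lemma erMu_split (p : ℝ) {S T : Finset β} (hST : S ⊆ T) (P Q : Finset β → Prop) :
    (∑ t ∈ T.powerset, if P (t ∩ S) ∧ Q (t \ S) then erWt p T t else 0)
      = erMu p S P * erMu p (T \ S) Q := by
  rw [erMu, erMu, Finset.sum_mul_sum]
  rw [← Finset.sum_product']
  refine Finset.sum_nbij' (fun t => (t ∩ S, t \ S)) (fun ab => ab.1 ∪ ab.2) ?_ ?_ ?_ ?_ ?_
  · intro t ht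
    rw [Finset.mem_powerset] at ht
    rw [Finset.mem_product, Finset.mem_powerset, Finset.mem_powerset]
    exact ⟨Finset.inter_subset_right, Finset.sdiff_subset_sdiff ht (le_refl _)⟩
  · intro ab hab
    rw [Finset.mem_product, Finset.mem_powerset, Finset.mem_powerset] at hab
    rw [Finset.mem_powerset]
    exact Finset.union_subset (hab.1.trans hST) (hab.2.trans (Finset.sdiff_subset))
  · intro t ht
    show t ∩ S ∪ t \ S = t
    ext x
    simp only [Finset.mem_union, Finset.mem_inter, Finset.mem_sdiff]
    tauto
  · intro ab hab
    rw [Finset.mem_product, Finset.mem_powerset, Finset.mem_powerset] at hab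
    have hd : Disjoint ab.2 S := Finset.disjoint_of_subset_left hab.2 Finset.sdiff_disjoint
    have hd1 : Disjoint ab.1 (T \ S) :=
      Finset.disjoint_of_subset_left hab.1 (Finset.disjoint_sdiff)
    have e1 : (ab.1 ∪ ab.2) ∩ S = ab.1 := by
      rw [Finset.union_inter_distrib_right, Finset.inter_eq_left.mpr hab.1,
        (Finset.disjoint_iff_inter_eq_empty.mp hd), Finset.union_empty]
    have e2 : (ab.1 ∪ ab.2) \ S = ab.2 := by
      rw [Finset.union_sdiff_distrib]
      rw [Finset.sdiff_eq_empty_iff_subset.mpr hab.1]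
      rw [Finset.sdiff_eq_self_of_disjoint hd, Finset.empty_union]
    show ((ab.1 ∪ ab.2) ∩ S, (ab.1 ∪ ab.2) \ S) = ab
    rw [e1, e2]
  · intro t ht
    rw [Finset.mem_powerset] at ht
    by_cases h : P (t ∩ S) ∧ Q (t \ S)
    · rw [if_pos h, if_pos h.1, if_pos h.2]
      exact erWt_split hST ht
    · rw [if_neg h]
      rcases not_and_or.mp h with h1 | h1
      · rw [if_neg h1, zero_mul]
      · rw [if_neg h1, mul_zero]

/-- The singleton event `t = {e}` has probability `p`. -/
lemma erMu_singleton (p : ℝ) (e : β) :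
    erMu p ({e} : Finset β) (fun a => a = {e}) = p := by
  have hps : ({e} : Finset β).powerset = {∅, {e}} := rfl
  rw [erMu, hps]
  have h0 : (∅ : Finset β) ≠ {e} := Ne.symm (Finset.singleton_ne_empty e)
  rw [Finset.sum_insert (by simpa using h0), Finset.sum_singleton]
  rw [if_neg h0, if_pos rfl, erWt]
  simp

/-- Chernoff-type bound for the lower binomial tail. -/
lemma erMu_tail_le {p K : ℝ} (hp0 : 0 ≤ p) (hp1 : p ≤ 1) (hK : 0 ≤ K) (S : Finset β) :
    erMu p S (fun a => (a.card : ℝ) < K)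
      ≤ Real.exp (K * Real.log 100) * (1 - 99 * p / 100) ^ S.card := by
  have hb0 : (0:ℝ) ≤ 1 - 99 * p / 100 := by linarith
  have key : ∀ a ∈ S.powerset, (if ((a.card : ℝ) < K) then erWt p S a else 0)
      ≤ Real.exp (K * Real.log 100) * ((p / 100) ^ a.card * (1 - p) ^ (S.card - a.card)) := by
    intro a _
    have hterm : (0:ℝ) ≤ (p / 100) ^ a.card * (1 - p) ^ (S.card - a.card) :=
      mul_nonneg (pow_nonneg (by linarith) _) (pow_nonneg (by linarith) _)
    by_cases h : (a.card : ℝ) < K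
    · rw [if_pos h, erWt]
      have h100 : (p : ℝ) ^ a.card = (100:ℝ) ^ a.card * (p / 100) ^ a.card := by
        rw [← mul_pow]; ring_nf
      rw [h100]
      have hexp : (100:ℝ) ^ a.card ≤ Real.exp (K * Real.log 100) := by
        have : (100:ℝ) ^ a.card = Real.exp ((a.card : ℝ) * Real.log 100) := by
          rw [Real.exp_nat_mul, Real.exp_log (by norm_num)]
        rw [this]
        apply Real.exp_le_exp.mpr
        have hl : (0:ℝ) ≤ Real.log 100 := Real.log_nonneg (by norm_num)
        exact mul_le_mul_of_nonneg_right h.le hl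
      calc (100:ℝ) ^ a.card * (p / 100) ^ a.card * (1 - p) ^ (S.card - a.card)
          = (100:ℝ) ^ a.card * ((p / 100) ^ a.card * (1 - p) ^ (S.card - a.card)) := by ring
        _ ≤ Real.exp (K * Real.log 100) * ((p / 100) ^ a.card * (1 - p) ^ (S.card - a.card)) :=
          mul_le_mul_of_nonneg_right hexp hterm
    · rw [if_neg h]
      positivity
  calc erMu p S (fun a => (a.card : ℝ) < K)
      ≤ ∑ a ∈ S.powerset,
          Real.exp (K * Real.log 100) * ((p / 100) ^ a.card * (1 - p) ^ (S.card - a.card)) :=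
        Finset.sum_le_sum key
    _ = Real.exp (K * Real.log 100) * (1 - 99 * p / 100) ^ S.card := by
        rw [← Finset.mul_sum, sum_pow_wt]
        congr 2
        ring

/-- Conditioning on a required edge set being present. -/
lemma erMu_req (p : ℝ) {R T : Finset β} (hRT : R ⊆ T) (Q : Finset β → Prop) :
    erMu p T (fun t => R ⊆ t ∧ Q (t \ R)) = p ^ R.card * erMu p (T \ R) Q := by
  have h1 : erMu p T (fun t => R ⊆ t ∧ Q (t \ R))
      = erMu p R (fun a => a = R) * erMu p (T \ R) Q := by
    rw [erMu, ← erMu_split p hRT (fun a => a = R) Q]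
    refine Finset.sum_congr rfl fun t _ => ?_
    congr 1
    rw [eq_iff_iff]
    constructor
    · rintro ⟨h1, h2⟩; exact ⟨Finset.inter_eq_right.mpr h1, h2⟩
    · rintro ⟨h1, h2⟩; exact ⟨Finset.inter_eq_right.mp h1, h2⟩
  rw [h1]
  congr 1
  rw [erMu, Finset.sum_eq_single_of_mem R (Finset.mem_powerset_self R)
    (fun b _ hb => by rw [if_neg hb])]
  rw [if_pos rfl, erWt]
  simp

/-- Splitting off a tail event. -/
lemma erMu_tail_split (p K : ℝ) {S T : Finset β} (hST : S ⊆ T) (Q : Finset β → Prop) :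
    erMu p T (fun t => ((t ∩ S).card : ℝ) < K ∧ Q (t \ S))
      = erMu p S (fun a => (a.card : ℝ) < K) * erMu p (T \ S) Q := by
  rw [erMu, ← erMu_split p hST (fun a => (a.card : ℝ) < K) Q]
  refine Finset.sum_congr rfl fun t _ => ?_
  by_cases h : ((t ∩ S).card : ℝ) < K ∧ Q (t \ S)
  · rw [if_pos h, if_pos h]
  · rw [if_neg h, if_neg h]

end ERaux


noncomputable section ERgraph
open Classical SimpleGraph Finset

/-- The edge set of the complete graph on `Fin n`. -/
def EU (n : ℕ) : Finset (Sym2 (Fin n)) := (⊤ : SimpleGraph (Fin n)).edgeFinset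

lemma mem_EU {n : ℕ} {e : Sym2 (Fin n)} : e ∈ EU n ↔ ¬ e.IsDiag := by
  simp [EU]

lemma card_EU (n : ℕ) : (EU n).card = n.choose 2 := by
  rw [EU, card_edgeFinset_top_eq_card_choose_two, Fintype.card_fin]

lemma mk_mem_EU {n : ℕ} {u v : Fin n} (h : u ≠ v) : s(u, v) ∈ EU n := by
  rw [mem_EU, Sym2.mk_isDiag_iff]
  exact h

lemma edgeSet_fromEdgeSet_of_subset {n : ℕ} {t : Finset (Sym2 (Fin n))} (ht : t ⊆ EU n) :
    (SimpleGraph.fromEdgeSet (↑t : Set (Sym2 (Fin n)))).edgeSet = ↑t := by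
  rw [SimpleGraph.edgeSet_fromEdgeSet]
  ext e
  simp only [Set.mem_diff, Finset.mem_coe, Set.mem_setOf_eq, and_iff_left_iff_imp]
  intro he
  exact mem_EU.mp (ht he)

lemma adj_fromEdgeSet_iff {n : ℕ} {t : Finset (Sym2 (Fin n))} (ht : t ⊆ EU n)
    {u v : Fin n} : (SimpleGraph.fromEdgeSet (↑t : Set (Sym2 (Fin n)))).Adj u v ↔ s(u, v) ∈ t := by
  rw [SimpleGraph.fromEdgeSet_adj]
  constructor
  · rintro ⟨h, _⟩; exact h
  · intro h
    refine ⟨h, fun huv => ?_⟩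
    have := mem_EU.mp (ht h)
    rw [huv] at this
    exact this (by simp)

lemma edgeFinset_fromEdgeSet_of_subset {n : ℕ} {t : Finset (Sym2 (Fin n))} (ht : t ⊆ EU n) :
    (SimpleGraph.fromEdgeSet (↑t : Set (Sym2 (Fin n)))).edgeFinset = t := by
  have h := edgeSet_fromEdgeSet_of_subset ht
  rw [SimpleGraph.edgeFinset, Set.toFinset_congr h, Finset.toFinset_coe]

lemma ncard_edgeSet_fromEdgeSet_of_subset {n : ℕ} {t : Finset (Sym2 (Fin n))} (ht : t ⊆ EU n) :
    (SimpleGraph.fromEdgeSet (↑t : Set (Sym2 (Fin n)))).edgeSet.ncard = t.card := by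
  rw [edgeSet_fromEdgeSet_of_subset ht, Set.ncard_coe_finset]

lemma ncard_edgeSet_eq_card_edgeFinset {n : ℕ} (G : SimpleGraph (Fin n)) :
    G.edgeSet.ncard = G.edgeFinset.card := by
  rw [← SimpleGraph.coe_edgeFinset, Set.ncard_coe_finset]

/-- The number of neighbors of `u` equals the number of edges of `t` containing `u`. -/
lemma ncard_neighborSet_fromEdgeSet {n : ℕ} {t : Finset (Sym2 (Fin n))} (ht : t ⊆ EU n)
    (u : Fin n) :
    ((SimpleGraph.fromEdgeSet (↑t : Set (Sym2 (Fin n)))).neighborSet u).ncard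
      = (t.filter (fun e => u ∈ e)).card := by
  have hset : (SimpleGraph.fromEdgeSet (↑t : Set (Sym2 (Fin n)))).neighborSet u
      = ↑(Finset.univ.filter (fun v => s(u, v) ∈ t)) := by
    ext v
    simp only [SimpleGraph.mem_neighborSet, Finset.coe_filter, Finset.mem_univ, true_and,
      Set.mem_setOf_eq]
    exact adj_fromEdgeSet_iff ht
  rw [hset, Set.ncard_coe_finset]
  refine Finset.card_bij (fun v _ => s(u, v)) ?_ ?_ ?_
  · intro v hv
    rw [Finset.mem_filter] at hv ⊢
    exact ⟨hv.2, Sym2.mem_mk_left u v⟩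
  · intro v₁ hv₁ v₂ hv₂ h
    exact Sym2.congr_right.mp h
  · intro e he
    rw [Finset.mem_filter] at he
    obtain ⟨het, hue⟩ := he
    refine ⟨Sym2.Mem.other hue, ?_, Sym2.other_spec hue⟩
    rw [Finset.mem_filter]
    refine ⟨Finset.mem_univ _, ?_⟩
    rw [Sym2.other_spec hue]
    exact het

/-- An edge containing two distinct vertices `u ≠ v` must be `s(u,v)`. -/
lemma sym2_eq_of_mem_mem {V : Type*} {e : Sym2 V} {u v : V} (hu : u ∈ e) (hv : v ∈ e)
    (hne : u ≠ v) : e = s(u, v) := by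
  induction e with
  | _ a b =>
    rw [Sym2.mem_iff] at hu hv
    rcases hu with rfl | rfl <;> rcases hv with h | h
    · exact absurd h.symm hne
    · rw [← h]
    · rw [← h, Sym2.eq_swap]
    · exact absurd h.symm hne

/-- The number of potential edges at `u` in the complete graph is `n - 1`. -/
lemma card_filter_EU (n : ℕ) (u : Fin n) :
    ((EU n).filter (fun e => u ∈ e)).card = n - 1 := by
  have h : (EU n).filter (fun e => u ∈ e) = (⊤ : SimpleGraph (Fin n)).incidenceFinset u := by
    rw [SimpleGraph.incidenceFinset_eq_filter]
    rfl
  rw [h, SimpleGraph.card_incidenceFinset_eq_degree, SimpleGraph.complete_graph_degree,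
    Fintype.card_fin]

/-- Case analysis for walks of length at most 2. -/
lemma walk_len_le_two_cases {V : Type*} {G : SimpleGraph V} {u v : V} (W : G.Walk u v) :
    W.length ≤ 2 → u = v ∨ G.Adj u v ∨ ∃ w, G.Adj u w ∧ G.Adj w v := by
  cases W with
  | nil => intro _; exact Or.inl rfl
  | cons hadj W' =>
    cases W' with
    | nil => intro _; exact Or.inr (Or.inl hadj)
    | cons hadj2 W'' =>
      cases W'' with
      | nil => intro _; exact Or.inr (Or.inr ⟨_, hadj, hadj2⟩)
      | cons h3 W3 =>
        intro hlen
        simp only [SimpleGraph.Walk.length_cons] at hlen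
        omega

lemma edist_le_two_cases {V : Type*} {G : SimpleGraph V} {u v : V}
    (h : G.edist u v ≤ 2) (hne : u ≠ v) :
    G.Adj u v ∨ ∃ w, G.Adj u w ∧ G.Adj w v := by
  have hnt : G.edist u v ≠ ⊤ := by
    intro hc
    rw [hc] at h
    simp at h
  obtain ⟨W, hW⟩ := SimpleGraph.exists_walk_of_edist_ne_top hnt
  have hlen : (W.length : ℕ∞) ≤ 2 := by rw [hW]; exact h
  have hlen' : W.length ≤ 2 := by exact_mod_cast hlen
  rcases walk_len_le_two_cases W hlen' with h1 | h1 | h1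
  · exact absurd h1 hne
  · exact Or.inl h1
  · exact Or.inr h1

/-- `erProb` as the Bernoulli product measure on subsets of `EU n`. -/
lemma erProb_eq_erMu (n : ℕ) (p : ℝ) (A : Set (SimpleGraph (Fin n))) :
    erProb n p A
      = erMu p (EU n) (fun t => SimpleGraph.fromEdgeSet (↑t : Set (Sym2 (Fin n))) ∈ A) := by
  rw [erProb, erMu]
  refine Finset.sum_nbij' (fun G => G.edgeFinset)
    (fun t => SimpleGraph.fromEdgeSet (↑t : Set (Sym2 (Fin n)))) ?_ ?_ ?_ ?_ ?_
  · intro G _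
    rw [Finset.mem_powerset]
    exact SimpleGraph.edgeFinset_mono le_top
  · intro t _
    exact Finset.mem_univ _
  · intro G _
    show SimpleGraph.fromEdgeSet (↑G.edgeFinset : Set (Sym2 (Fin n))) = G
    rw [SimpleGraph.coe_edgeFinset, SimpleGraph.fromEdgeSet_edgeSet]
  · intro t ht
    apply Finset.coe_injective
    rw [SimpleGraph.coe_edgeFinset]
    exact edgeSet_fromEdgeSet_of_subset (Finset.mem_powerset.mp ht)
  · intro G _
    have h1 : G.edgeSet.ncard = G.edgeFinset.card := ncard_edgeSet_eq_card_edgeFinset G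
    have h2 : SimpleGraph.fromEdgeSet (↑G.edgeFinset : Set (Sym2 (Fin n))) = G := by
      rw [SimpleGraph.coe_edgeFinset, SimpleGraph.fromEdgeSet_edgeSet]
    rw [erWt, card_EU, h1, h2]

/-- "u has fewer than K incident edges in t". -/
def smallT {n : ℕ} (K : ℝ) (u : Fin n) (t : Finset (Sym2 (Fin n))) : Prop :=
  ((t.filter (fun e => u ∈ e)).card : ℝ) < K

/-- The Chernoff bound quantity. -/
def Qb (n : ℕ) (p K : ℝ) : ℝ := Real.exp (K * Real.log 100) * (1 - 99 * p / 100) ^ (n - 4)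

section PairBounds

variable {n : ℕ} {p K : ℝ}

lemma Qb_nonneg (hp1 : p ≤ 1) : 0 ≤ Qb n p K :=
  mul_nonneg (Real.exp_nonneg _) (pow_nonneg (by linarith) _)

lemma tail_le_Qb (hp0 : 0 ≤ p) (hp1 : p ≤ 1) (hK : 0 ≤ K)
    {S : Finset (Sym2 (Fin n))} (hcard : n - 4 ≤ S.card) :
    erMu p S (fun a => (a.card : ℝ) < K) ≤ Qb n p K := by
  have hb0 : (0:ℝ) ≤ 1 - 99 * p / 100 := by linarith
  have hb1 : 1 - 99 * p / 100 ≤ 1 := by linarith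
  calc erMu p S (fun a => (a.card : ℝ) < K)
      ≤ Real.exp (K * Real.log 100) * (1 - 99 * p / 100) ^ S.card := erMu_tail_le hp0 hp1 hK S
    _ ≤ Qb n p K := by
        rw [Qb]
        exact mul_le_mul_of_nonneg_left (pow_le_pow_of_le_one hb0 hb1 hcard)
          (Real.exp_nonneg _)

/-- Cardinality of the reduced incidence set. -/
lemma card_incidence_sdiff_ge (u : Fin n) (B : Finset (Sym2 (Fin n))) :
    (n - 1) - B.card ≤ (((EU n).filter (fun e => u ∈ e)) \ B).card := by
  have := Finset.le_card_sdiff B ((EU n).filter (fun e => u ∈ e))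
  rw [card_filter_EU] at this
  exact this

lemma erMu_adj_le (hp0 : 0 ≤ p) (hp1 : p ≤ 1) (hK : 0 ≤ K) {u v : Fin n} (huv : u ≠ v) :
    erMu p (EU n) (fun t => s(u, v) ∈ t ∧ smallT K u t ∧ smallT K v t)
      ≤ p * (Qb n p K * Qb n p K) := by
  set e : Sym2 (Fin n) := s(u, v) with he
  set T0 : Finset (Sym2 (Fin n)) := EU n with hT0
  set Su : Finset (Sym2 (Fin n)) := (T0 \ {e}).filter (fun x => u ∈ x) with hSu
  set T2 : Finset (Sym2 (Fin n)) := (T0 \ {e}) \ Su with hT2x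
  set Sv : Finset (Sym2 (Fin n)) := T2.filter (fun x => v ∈ x) with hSv
  -- the product-form event
  set Q2 : Finset (Sym2 (Fin n)) → Prop :=
    fun c => ((c ∩ Sv).card : ℝ) < K ∧ (fun _ => True) (c \ Sv) with hQ2
  set Q1 : Finset (Sym2 (Fin n)) → Prop :=
    fun b => ((b ∩ Su).card : ℝ) < K ∧ Q2 (b \ Su) with hQ1
  have hmono : ∀ t, (s(u, v) ∈ t ∧ smallT K u t ∧ smallT K v t) →
      ({e} ⊆ t ∧ Q1 (t \ {e})) := by
    intro t ⟨het, hsu, hsv⟩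
    refine ⟨Finset.singleton_subset_iff.mpr het, ?_, ?_, trivial⟩
    · refine lt_of_le_of_lt ?_ hsu
      have hsub : (t \ {e}) ∩ Su ⊆ t.filter (fun x => u ∈ x) := by
        intro x hx
        simp only [Finset.mem_inter, Finset.mem_sdiff, hSu, Finset.mem_filter] at hx
        exact Finset.mem_filter.mpr ⟨hx.1.1, hx.2.2⟩
      exact_mod_cast Nat.cast_le.mpr (Finset.card_le_card hsub)
    · refine lt_of_le_of_lt ?_ hsv
      have hsub : ((t \ {e}) \ Su) ∩ Sv ⊆ t.filter (fun x => v ∈ x) := by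
        intro x hx
        simp only [Finset.mem_inter, Finset.mem_sdiff, hSv, Finset.mem_filter] at hx
        exact Finset.mem_filter.mpr ⟨hx.1.1.1, hx.2.2⟩
      exact_mod_cast Nat.cast_le.mpr (Finset.card_le_card hsub)
  have hstep : erMu p (EU n) (fun t => s(u, v) ∈ t ∧ smallT K u t ∧ smallT K v t)
      ≤ erMu p T0 (fun t => {e} ⊆ t ∧ Q1 (t \ {e})) := erMu_mono hp0 hp1 _ hmono
  have heT0 : ({e} : Finset (Sym2 (Fin n))) ⊆ T0 :=
    Finset.singleton_subset_iff.mpr (mk_mem_EU huv)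
  have hsplit1 : erMu p T0 (fun t => {e} ⊆ t ∧ Q1 (t \ {e}))
      = p ^ 1 * erMu p (T0 \ {e}) Q1 := by
    rw [erMu_req p heT0 Q1, Finset.card_singleton]
  have hsplit2 : erMu p (T0 \ {e}) Q1
      = erMu p Su (fun a => (a.card : ℝ) < K) * erMu p T2 Q2 := by
    rw [hQ1]
    exact erMu_tail_split p K (Finset.filter_subset _ _) Q2
  have hsplit3 : erMu p T2 Q2
      = erMu p Sv (fun a => (a.card : ℝ) < K) * 1 := by
    rw [hQ2]
    rw [erMu_tail_split p K (Finset.filter_subset _ _) (fun _ => True)]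
    rw [erMu_true]
  -- cardinalities
  have hcardSu : n - 4 ≤ Su.card := by
    have hEq : Su = ((EU n).filter (fun x => u ∈ x)) \ {e} := by
      ext x
      simp only [hSu, Finset.mem_filter, Finset.mem_sdiff, Finset.mem_singleton]
      tauto
    rw [hEq]
    have := card_incidence_sdiff_ge u ({e} : Finset (Sym2 (Fin n)))
    rw [Finset.card_singleton] at this
    omega
  have hcardSv : n - 4 ≤ Sv.card := by
    have hsub : ((EU n).filter (fun x => v ∈ x)) \ {e} ⊆ Sv := by
      intro x hx
      simp only [Finset.mem_sdiff, Finset.mem_filter, Finset.mem_singleton] at hx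
      obtain ⟨⟨hxEU, hvx⟩, hxe⟩ := hx
      have hxSu : x ∉ Su := by
        intro hxs
        rw [hSu, Finset.mem_filter] at hxs
        exact hxe (sym2_eq_of_mem_mem hxs.2 hvx huv)
      simp only [hSv, Finset.mem_filter, hT2x, Finset.mem_sdiff, Finset.mem_singleton]
      exact ⟨⟨⟨hxEU, hxe⟩, hxSu⟩, hvx⟩
    have h1 := card_incidence_sdiff_ge v ({e} : Finset (Sym2 (Fin n)))
    rw [Finset.card_singleton] at h1
    have h2 := Finset.card_le_card hsub
    omega
  have htailu := tail_le_Qb hp0 hp1 hK hcardSu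
  have htailv := tail_le_Qb hp0 hp1 hK hcardSv
  have hnn1 : 0 ≤ erMu p Su (fun a => (a.card : ℝ) < K) := erMu_nonneg hp0 hp1 _ _
  have hnn2 : 0 ≤ erMu p Sv (fun a => (a.card : ℝ) < K) := erMu_nonneg hp0 hp1 _ _
  calc erMu p (EU n) (fun t => s(u, v) ∈ t ∧ smallT K u t ∧ smallT K v t)
      ≤ p ^ 1 * (erMu p Su (fun a => (a.card : ℝ) < K)
          * (erMu p Sv (fun a => (a.card : ℝ) < K) * 1)) := by
        rw [← hsplit3, ← hsplit2, ← hsplit1]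
        exact hstep
    _ ≤ p * (Qb n p K * Qb n p K) := by
        rw [pow_one, mul_one]
        have hQ : 0 ≤ Qb n p K := Qb_nonneg hp1
        exact mul_le_mul_of_nonneg_left
          (mul_le_mul htailu htailv hnn2 hQ) hp0

lemma erMu_cn_le (hp0 : 0 ≤ p) (hp1 : p ≤ 1) (hK : 0 ≤ K) {u v w : Fin n}
    (huv : u ≠ v) (hwu : w ≠ u) (hwv : w ≠ v) :
    erMu p (EU n) (fun t => s(u, w) ∈ t ∧ s(v, w) ∈ t ∧ smallT K u t ∧ smallT K v t)
      ≤ p * p * (Qb n p K * Qb n p K) := by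
  set e1 : Sym2 (Fin n) := s(u, w) with he1
  set e2 : Sym2 (Fin n) := s(v, w) with he2
  have he12 : e1 ≠ e2 := by
    intro h
    rw [he1, he2] at h
    rw [Sym2.eq_iff] at h
    rcases h with ⟨h1, _⟩ | ⟨h1, h2⟩
    · exact huv h1
    · exact hwu h1.symm
  set R : Finset (Sym2 (Fin n)) := {e1, e2} with hR
  have hcardR : R.card = 2 := by
    rw [hR, Finset.card_insert_of_notMem (by simpa using he12), Finset.card_singleton]
  set T0 : Finset (Sym2 (Fin n)) := EU n with hT0
  set Su : Finset (Sym2 (Fin n)) := (T0 \ R).filter (fun x => u ∈ x) with hSu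
  set T2 : Finset (Sym2 (Fin n)) := (T0 \ R) \ Su with hT2x
  set Sv : Finset (Sym2 (Fin n)) := T2.filter (fun x => v ∈ x) with hSv
  set Q2 : Finset (Sym2 (Fin n)) → Prop :=
    fun c => ((c ∩ Sv).card : ℝ) < K ∧ (fun _ => True) (c \ Sv) with hQ2
  set Q1 : Finset (Sym2 (Fin n)) → Prop :=
    fun b => ((b ∩ Su).card : ℝ) < K ∧ Q2 (b \ Su) with hQ1
  have hmono : ∀ t, (s(u, w) ∈ t ∧ s(v, w) ∈ t ∧ smallT K u t ∧ smallT K v t) →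
      (R ⊆ t ∧ Q1 (t \ R)) := by
    intro t ⟨he1t, he2t, hsu, hsv⟩
    refine ⟨?_, ?_, ?_, trivial⟩
    · rw [hR]
      intro x hx
      rcases Finset.mem_insert.mp hx with rfl | hx
      · exact he1t
      · rw [Finset.mem_singleton.mp hx]; exact he2t
    · refine lt_of_le_of_lt ?_ hsu
      have hsub : (t \ R) ∩ Su ⊆ t.filter (fun x => u ∈ x) := by
        intro x hx
        simp only [Finset.mem_inter, Finset.mem_sdiff, hSu, Finset.mem_filter] at hx
        exact Finset.mem_filter.mpr ⟨hx.1.1, hx.2.2⟩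
      exact_mod_cast Nat.cast_le.mpr (Finset.card_le_card hsub)
    · refine lt_of_le_of_lt ?_ hsv
      have hsub : ((t \ R) \ Su) ∩ Sv ⊆ t.filter (fun x => v ∈ x) := by
        intro x hx
        simp only [Finset.mem_inter, Finset.mem_sdiff, hSv, Finset.mem_filter] at hx
        exact Finset.mem_filter.mpr ⟨hx.1.1.1, hx.2.2⟩
      exact_mod_cast Nat.cast_le.mpr (Finset.card_le_card hsub)
  have hstep : erMu p (EU n) (fun t => s(u, w) ∈ t ∧ s(v, w) ∈ t ∧ smallT K u t ∧ smallT K v t)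
      ≤ erMu p T0 (fun t => R ⊆ t ∧ Q1 (t \ R)) := erMu_mono hp0 hp1 _ hmono
  have hRT0 : R ⊆ T0 := by
    rw [hR]
    intro x hx
    rcases Finset.mem_insert.mp hx with rfl | hx
    · exact mk_mem_EU (Ne.symm hwu)
    · rw [Finset.mem_singleton.mp hx]; exact mk_mem_EU (Ne.symm hwv)
  have hsplit1 : erMu p T0 (fun t => R ⊆ t ∧ Q1 (t \ R))
      = p ^ 2 * erMu p (T0 \ R) Q1 := by
    rw [erMu_req p hRT0 Q1, hcardR]
  have hsplit2 : erMu p (T0 \ R) Q1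
      = erMu p Su (fun a => (a.card : ℝ) < K) * erMu p T2 Q2 := by
    rw [hQ1]
    exact erMu_tail_split p K (Finset.filter_subset _ _) Q2
  have hsplit3 : erMu p T2 Q2
      = erMu p Sv (fun a => (a.card : ℝ) < K) * 1 := by
    rw [hQ2]
    rw [erMu_tail_split p K (Finset.filter_subset _ _) (fun _ => True)]
    rw [erMu_true]
  have hcardSu : n - 4 ≤ Su.card := by
    have hEq : Su = ((EU n).filter (fun x => u ∈ x)) \ R := by
      ext x
      simp only [hSu, Finset.mem_filter, Finset.mem_sdiff]
      tauto
    rw [hEq]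
    have := card_incidence_sdiff_ge u R
    omega
  have hcardSv : n - 4 ≤ Sv.card := by
    have hsub : ((EU n).filter (fun x => v ∈ x)) \ (R ∪ {s(u, v)}) ⊆ Sv := by
      intro x hx
      simp only [Finset.mem_sdiff, Finset.mem_filter, Finset.mem_union,
        Finset.mem_singleton, not_or] at hx
      obtain ⟨⟨hxEU, hvx⟩, hxR, hxuv⟩ := hx
      have hxSu : x ∉ Su := by
        intro hxs
        rw [hSu, Finset.mem_filter] at hxs
        exact hxuv (sym2_eq_of_mem_mem hxs.2 hvx huv)
      simp only [hSv, Finset.mem_filter, hT2x, Finset.mem_sdiff]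
      exact ⟨⟨⟨hxEU, hxR⟩, hxSu⟩, hvx⟩
    have h1 := card_incidence_sdiff_ge v (R ∪ {s(u, v)})
    have h2 := Finset.card_le_card hsub
    have h3 : (R ∪ {s(u, v)}).card ≤ 3 := by
      calc (R ∪ {s(u, v)}).card ≤ R.card + 1 :=
        le_trans (Finset.card_union_le _ _) (by rw [Finset.card_singleton])
      _ ≤ 3 := by omega
    omega
  have htailu := tail_le_Qb hp0 hp1 hK hcardSu
  have htailv := tail_le_Qb hp0 hp1 hK hcardSv
  have hnn2 : 0 ≤ erMu p Sv (fun a => (a.card : ℝ) < K) := erMu_nonneg hp0 hp1 _ _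
  calc erMu p (EU n) (fun t => s(u, w) ∈ t ∧ s(v, w) ∈ t ∧ smallT K u t ∧ smallT K v t)
      ≤ p ^ 2 * (erMu p Su (fun a => (a.card : ℝ) < K)
          * (erMu p Sv (fun a => (a.card : ℝ) < K) * 1)) := by
        rw [← hsplit3, ← hsplit2, ← hsplit1]
        exact hstep
    _ ≤ p * p * (Qb n p K * Qb n p K) := by
        rw [mul_one, pow_two]
        have hQ : 0 ≤ Qb n p K := Qb_nonneg hp1
        exact mul_le_mul_of_nonneg_left
          (mul_le_mul htailu htailv hnn2 hQ) (mul_nonneg hp0 hp0)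

/-- The bad event, in edge-subset language. -/
def BadT (n : ℕ) (K : ℝ) (t : Finset (Sym2 (Fin n))) : Prop :=
  ∃ u v : Fin n, u ≠ v ∧ smallT K u t ∧ smallT K v t ∧
    (s(u, v) ∈ t ∨ ∃ w : Fin n, w ≠ u ∧ w ≠ v ∧ s(u, w) ∈ t ∧ s(v, w) ∈ t)

/-- Union bound for the bad event. -/
lemma erMu_BadT_le (hp0 : 0 ≤ p) (hp1 : p ≤ 1) (hK : 0 ≤ K) :
    erMu p (EU n) (BadT n K)
      ≤ (n : ℝ) ^ 2 * (p * (Qb n p K * Qb n p K))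
        + (n : ℝ) ^ 2 * ((n : ℝ) * (p * p * (Qb n p K * Qb n p K))) := by
  classical
  have hQ : 0 ≤ Qb n p K := Qb_nonneg hp1
  set C1 : ℝ := p * (Qb n p K * Qb n p K) with hC1
  set C2 : ℝ := p * p * (Qb n p K * Qb n p K) with hC2
  have hC1nn : 0 ≤ C1 := mul_nonneg hp0 (mul_nonneg hQ hQ)
  have hC2nn : 0 ≤ C2 := mul_nonneg (mul_nonneg hp0 hp0) (mul_nonneg hQ hQ)
  -- per-pair events
  set adjE : Fin n × Fin n → Finset (Sym2 (Fin n)) → Prop :=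
    fun pr t => s(pr.1, pr.2) ∈ t ∧ smallT K pr.1 t ∧ smallT K pr.2 t with hadjE
  set cnE : Fin n × Fin n → Fin n → Finset (Sym2 (Fin n)) → Prop :=
    fun pr w t => w ≠ pr.1 ∧ w ≠ pr.2 ∧ s(pr.1, w) ∈ t ∧ s(pr.2, w) ∈ t
      ∧ smallT K pr.1 t ∧ smallT K pr.2 t with hcnE
  have h1 : ∀ t, BadT n K t →
      ∃ pr ∈ (Finset.univ.offDiag : Finset (Fin n × Fin n)),
        (fun pr t => adjE pr t ∨ ∃ w ∈ (Finset.univ : Finset (Fin n)), cnE pr w t) pr t := by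
    rintro t ⟨u, v, huv, hsu, hsv, hcase⟩
    refine ⟨(u, v), Finset.mem_offDiag.mpr ⟨Finset.mem_univ _, Finset.mem_univ _, huv⟩, ?_⟩
    rcases hcase with h | ⟨w, hwu, hwv, h1, h2⟩
    · exact Or.inl ⟨h, hsu, hsv⟩
    · exact Or.inr ⟨w, Finset.mem_univ _, hwu, hwv, h1, h2, hsu, hsv⟩
  calc erMu p (EU n) (BadT n K)
      ≤ erMu p (EU n) (fun t => ∃ pr ∈ (Finset.univ.offDiag : Finset (Fin n × Fin n)),
          (fun pr t => adjE pr t ∨ ∃ w ∈ (Finset.univ : Finset (Fin n)), cnE pr w t) pr t) :=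
        erMu_mono hp0 hp1 _ h1
    _ ≤ ∑ pr ∈ (Finset.univ.offDiag : Finset (Fin n × Fin n)),
          erMu p (EU n) (fun t => adjE pr t ∨ ∃ w ∈ (Finset.univ : Finset (Fin n)), cnE pr w t) :=
        erMu_exists_le hp0 hp1 _ _ _
    _ ≤ ∑ pr ∈ (Finset.univ.offDiag : Finset (Fin n × Fin n)), (C1 + (n : ℝ) * C2) := by
        refine Finset.sum_le_sum fun pr hpr => ?_
        have hprne : pr.1 ≠ pr.2 := (Finset.mem_offDiag.mp hpr).2.2
        have hadj : erMu p (EU n) (adjE pr) ≤ C1 := by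
          rw [hC1, hadjE]
          exact erMu_adj_le hp0 hp1 hK hprne
        have hcn : erMu p (EU n) (fun t => ∃ w ∈ (Finset.univ : Finset (Fin n)), cnE pr w t)
            ≤ (n : ℝ) * C2 := by
          calc erMu p (EU n) (fun t => ∃ w ∈ (Finset.univ : Finset (Fin n)), cnE pr w t)
              ≤ ∑ w ∈ (Finset.univ : Finset (Fin n)), erMu p (EU n) (cnE pr w) :=
                erMu_exists_le hp0 hp1 _ _ _
            _ ≤ ∑ _w ∈ (Finset.univ : Finset (Fin n)), C2 := by
                refine Finset.sum_le_sum fun w _ => ?_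
                by_cases hw : w ≠ pr.1 ∧ w ≠ pr.2
                · calc erMu p (EU n) (cnE pr w)
                      ≤ erMu p (EU n) (fun t => s(pr.1, w) ∈ t ∧ s(pr.2, w) ∈ t
                          ∧ smallT K pr.1 t ∧ smallT K pr.2 t) :=
                        erMu_mono hp0 hp1 _ (fun t ht => ⟨ht.2.2.1, ht.2.2.2.1, ht.2.2.2.2⟩)
                    _ ≤ C2 := by
                        rw [hC2]
                        exact erMu_cn_le hp0 hp1 hK hprne hw.1 hw.2
                · calc erMu p (EU n) (cnE pr w)
                      ≤ erMu p (EU n) (fun _ => False) := by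
                        refine erMu_mono hp0 hp1 _ (fun t ht => ?_)
                        exact hw ⟨ht.1, ht.2.1⟩
                    _ = 0 := by simp [erMu]
                    _ ≤ C2 := hC2nn
            _ = (n : ℝ) * C2 := by
                rw [Finset.sum_const, Finset.card_univ, Fintype.card_fin, nsmul_eq_mul]
        calc erMu p (EU n) (fun t => adjE pr t ∨ ∃ w ∈ (Finset.univ : Finset (Fin n)), cnE pr w t)
            ≤ erMu p (EU n) (adjE pr)
              + erMu p (EU n) (fun t => ∃ w ∈ (Finset.univ : Finset (Fin n)), cnE pr w t) :=
              erMu_or_le hp0 hp1 _ _ _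
          _ ≤ C1 + (n : ℝ) * C2 := add_le_add hadj hcn
    _ ≤ (n : ℝ) ^ 2 * (C1 + (n : ℝ) * C2) := by
        rw [Finset.sum_const, nsmul_eq_mul]
        refine mul_le_mul_of_nonneg_right ?_
          (add_nonneg hC1nn (mul_nonneg (Nat.cast_nonneg n) hC2nn))
        rw [Finset.offDiag_card, Finset.card_univ, Fintype.card_fin]
        calc ((n * n - n : ℕ) : ℝ) ≤ ((n * n : ℕ) : ℝ) := by
              exact_mod_cast Nat.sub_le _ _
          _ = (n : ℝ) ^ 2 := by push_cast; ring
    _ = (n : ℝ) ^ 2 * C1 + (n : ℝ) ^ 2 * ((n : ℝ) * C2) := by ring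

end PairBounds

section Analysis

lemma log100_le_five : Real.log 100 ≤ 5 := by
  rw [Real.log_le_iff_le_exp (by norm_num)]
  have h := Real.exp_one_gt_d9
  have h5 : (2.7182818283 : ℝ) ^ (5:ℕ) ≤ (Real.exp 1) ^ (5:ℕ) :=
    pow_le_pow_left₀ (by norm_num) h.le 5
  have he5 : Real.exp 5 = (Real.exp 1) ^ (5:ℕ) := by
    rw [← Real.exp_nat_mul]; norm_num
  rw [he5]
  calc (100:ℝ) ≤ (2.7182818283 : ℝ) ^ (5:ℕ) := by norm_num
    _ ≤ _ := h5

/-- The explicit high-probability bound, for `n` in the "eventually" regime. -/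
lemma Bnd_le_exp {n : ℕ} {a : ℝ} (ha0 : 0 ≤ a) (haL : a ≤ Real.log n)
    (hL1 : 1 ≤ Real.log n) (hLn : Real.log n / n ≤ 1 / 16) (hn : 5 ≤ n) :
    ((n : ℝ) ^ 2 * (((Real.log n + a) / n)
        * (Qb n ((Real.log n + a) / n) (Real.log n / 100)
            * Qb n ((Real.log n + a) / n) (Real.log n / 100)))
      + (n : ℝ) ^ 2 * ((n : ℝ) * (((Real.log n + a) / n) * ((Real.log n + a) / n)
          * (Qb n ((Real.log n + a) / n) (Real.log n / 100)
              * Qb n ((Real.log n + a) / n) (Real.log n / 100)))))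
      ≤ 96 * Real.exp 2 * Real.exp (-(19/50) * Real.log n) := by
  set L : ℝ := Real.log n with hLdef
  set pp : ℝ := (L + a) / n with hpp
  set K : ℝ := L / 100 with hKdef
  have hn5 : (5:ℝ) ≤ (n:ℝ) := by exact_mod_cast hn
  have hn0 : (0:ℝ) < (n:ℝ) := by linarith
  have hp0 : 0 ≤ pp := div_nonneg (by linarith) hn0.le
  have hLn' : L ≤ (n:ℝ) / 16 := by
    rw [div_le_div_iff₀ hn0 (by norm_num)] at hLn
    linarith
  have hp2 : pp * (n:ℝ) = L + a := by
    rw [hpp]; field_simp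
  have hppLn : pp ≤ 2 * L / (n:ℝ) := by
    rw [hpp, div_le_div_iff₀ hn0 hn0]
    nlinarith
  have hp18 : pp ≤ 1 / 8 := by
    have : 2 * L / (n:ℝ) ≤ 1/8 := by
      rw [div_le_iff₀ hn0]
      nlinarith
    linarith
  have hp1 : pp ≤ 1 := by linarith
  have hb0 : (0:ℝ) ≤ 1 - 99 * pp / 100 := by linarith
  have hK0 : 0 ≤ K := by rw [hKdef]; linarith
  -- single-factor bound
  have hQble : Qb n pp K ≤ Real.exp (1 - (94/100) * L) := by
    rw [Qb]
    have h1 : Real.exp (K * Real.log 100) ≤ Real.exp ((5/100) * L) := by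
      apply Real.exp_le_exp.mpr
      have := mul_le_mul_of_nonneg_left log100_le_five hK0
      rw [hKdef] at this ⊢
      linarith
    have hm : ((n - 4 : ℕ) : ℝ) = (n:ℝ) - 4 := by
      rw [Nat.cast_sub (by omega)]; norm_num
    have hppm : L + a - 1 ≤ pp * ((n:ℝ) - 4) := by
      have hexpand : pp * ((n:ℝ) - 4) = (L + a) - 4 * (L + a) / (n:ℝ) := by
        rw [hpp]; field_simp
      have h4 : 4 * (L + a) / (n:ℝ) ≤ 1 := by
        rw [div_le_iff₀ hn0]
        nlinarith
      linarith
    have h2 : (1 - 99 * pp / 100) ^ (n - 4) ≤ Real.exp (-(99/100) * (L + a - 1)) := by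
      calc (1 - 99 * pp / 100) ^ (n - 4)
          ≤ (Real.exp (-(99 * pp / 100))) ^ (n - 4) := by
            apply pow_le_pow_left₀ hb0
            have := Real.add_one_le_exp (-(99 * pp / 100))
            linarith
        _ = Real.exp (((n - 4 : ℕ) : ℝ) * (-(99 * pp / 100))) := by
            rw [Real.exp_nat_mul]
        _ ≤ Real.exp (-(99/100) * (L + a - 1)) := by
            apply Real.exp_le_exp.mpr
            rw [hm]
            nlinarith
    calc Real.exp (K * Real.log 100) * (1 - 99 * pp / 100) ^ (n - 4)
        ≤ Real.exp ((5/100) * L) * Real.exp (-(99/100) * (L + a - 1)) :=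
          mul_le_mul h1 h2 (pow_nonneg hb0 _) (Real.exp_nonneg _)
      _ = Real.exp ((5/100) * L + (-(99/100) * (L + a - 1))) := (Real.exp_add _ _).symm
      _ ≤ Real.exp (1 - (94/100) * L) := by
          apply Real.exp_le_exp.mpr
          nlinarith
  have hQb0 : 0 ≤ Qb n pp K := Qb_nonneg hp1
  have hQb2 : Qb n pp K * Qb n pp K ≤ Real.exp (2 - (188/100) * L) := by
    calc Qb n pp K * Qb n pp K
        ≤ Real.exp (1 - (94/100) * L) * Real.exp (1 - (94/100) * L) :=
          mul_le_mul hQble hQble hQb0 (Real.exp_nonneg _)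
      _ = Real.exp ((1 - (94/100) * L) + (1 - (94/100) * L)) := (Real.exp_add _ _).symm
      _ = Real.exp (2 - (188/100) * L) := by ring_nf
  -- polynomial prefactor
  have hfront : (n:ℝ)^2 * pp + (n:ℝ)^3 * (pp * pp) ≤ 6 * (n:ℝ) * L^2 := by
    have e1 : (n:ℝ)^2 * pp = (n:ℝ) * (L + a) := by
      rw [← hp2]; ring
    have e2 : (n:ℝ)^3 * (pp * pp) = (n:ℝ) * ((L + a) * (L + a)) := by
      rw [← hp2]; ring
    rw [e1, e2]
    have h1 : L + a ≤ 2 * L := by linarith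
    have h2 : (L + a) * (L + a) ≤ 4 * L ^ 2 := by nlinarith
    have h3 : L ≤ L ^ 2 := by nlinarith
    have g1 := mul_le_mul_of_nonneg_left h1 hn0.le
    have g2 := mul_le_mul_of_nonneg_left h2 hn0.le
    have g3 := mul_le_mul_of_nonneg_left h3 hn0.le
    nlinarith
  -- exponential domination of the prefactor
  have hnL : (n:ℝ) = Real.exp L := by
    rw [hLdef, Real.exp_log hn0]
  have hL4 : L ≤ 4 * Real.exp (L / 4) := by
    have := Real.add_one_le_exp (L / 4)
    linarith
  have hL2 : L^2 ≤ 16 * Real.exp (L / 2) := by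
    have h0 : L^2 ≤ (4 * Real.exp (L/4))^2 := by
      apply pow_le_pow_left₀ (by linarith) hL4
    calc L^2 ≤ 16 * (Real.exp (L/4) * Real.exp (L/4)) := by nlinarith
      _ = 16 * Real.exp (L/2) := by
          rw [← Real.exp_add]
          ring_nf
  have hfinal : 6 * (n:ℝ) * L^2 ≤ 96 * Real.exp ((3/2) * L) := by
    calc 6 * (n:ℝ) * L^2 ≤ 6 * Real.exp L * (16 * Real.exp (L/2)) := by
          rw [hnL]
          have he : 0 < Real.exp L := Real.exp_pos _
          nlinarith [Real.exp_pos L, sq_nonneg L, hL2]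
      _ = 96 * (Real.exp L * Real.exp (L/2)) := by ring
      _ = 96 * Real.exp ((3/2) * L) := by
          rw [← Real.exp_add]
          ring_nf
  -- assemble
  have hexpnn : (0:ℝ) ≤ Real.exp (2 - (188/100) * L) := Real.exp_nonneg _
  have hfront0 : 0 ≤ (n:ℝ)^2 * pp + (n:ℝ)^3 * (pp * pp) := by positivity
  calc (n : ℝ) ^ 2 * (pp * (Qb n pp K * Qb n pp K))
        + (n : ℝ) ^ 2 * ((n : ℝ) * (pp * pp * (Qb n pp K * Qb n pp K)))
      = ((n:ℝ)^2 * pp + (n:ℝ)^3 * (pp * pp)) * (Qb n pp K * Qb n pp K) := by ring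
    _ ≤ (6 * (n:ℝ) * L^2) * Real.exp (2 - (188/100) * L) := by
        apply mul_le_mul hfront hQb2 (mul_nonneg hQb0 hQb0)
        positivity
    _ ≤ (96 * Real.exp ((3/2) * L)) * Real.exp (2 - (188/100) * L) := by
        apply mul_le_mul_of_nonneg_right hfinal hexpnn
    _ = 96 * Real.exp 2 * Real.exp (-(19/50) * L) := by
        rw [mul_assoc, ← Real.exp_add, mul_assoc, ← Real.exp_add]
        ring_nf

end Analysis

section Main
open Filter

/-- The good event. -/
def An (n : ℕ) : Set (SimpleGraph (Fin n)) :=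
  {G | ∀ u v : Fin n, u ≠ v →
    ((G.neighborSet u).ncard : ℝ) < Real.log n / 100 →
    ((G.neighborSet v).ncard : ℝ) < Real.log n / 100 →
    (2 : ℕ∞) < G.edist u v}

lemma badT_of_not_mem {n : ℕ} {t : Finset (Sym2 (Fin n))} (ht : t ⊆ EU n)
    (h : SimpleGraph.fromEdgeSet (↑t : Set (Sym2 (Fin n))) ∉ An n) :
    BadT n (Real.log n / 100) t := by
  set G := SimpleGraph.fromEdgeSet (↑t : Set (Sym2 (Fin n))) with hG
  rw [An, Set.mem_setOf_eq] at h
  push_neg at h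
  obtain ⟨u, v, huv, hsu, hsv, hde⟩ := h
  have hde2 : G.edist u v ≤ 2 := hde
  refine ⟨u, v, huv, ?_, ?_, ?_⟩
  · rw [smallT, ← ncard_neighborSet_fromEdgeSet ht u]; exact hsu
  · rw [smallT, ← ncard_neighborSet_fromEdgeSet ht v]; exact hsv
  · rcases edist_le_two_cases hde2 huv with hadj | ⟨w, h1, h2⟩
    · exact Or.inl ((adj_fromEdgeSet_iff ht).mp hadj)
    · refine Or.inr ⟨w, h1.ne', h2.ne, (adj_fromEdgeSet_iff ht).mp h1, ?_⟩
      have := (adj_fromEdgeSet_iff ht).mp h2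
      rwa [Sym2.eq_swap] at this

lemma erProb_An_ge {n : ℕ} {p : ℝ} (hp0 : 0 ≤ p) (hp1 : p ≤ 1)
    (hK : 0 ≤ Real.log n / 100) :
    1 - ((n : ℝ) ^ 2 * (p * (Qb n p (Real.log n / 100) * Qb n p (Real.log n / 100)))
        + (n : ℝ) ^ 2 * ((n : ℝ) * (p * p
            * (Qb n p (Real.log n / 100) * Qb n p (Real.log n / 100)))))
      ≤ erProb n p (An n) := by
  rw [erProb_eq_erMu]
  have hcompl := erMu_add_not p (EU n)
    (fun t => SimpleGraph.fromEdgeSet (↑t : Set (Sym2 (Fin n))) ∈ An n)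
  have hb : erMu p (EU n)
      (fun t => ¬ (SimpleGraph.fromEdgeSet (↑t : Set (Sym2 (Fin n))) ∈ An n))
      ≤ erMu p (EU n) (BadT n (Real.log n / 100)) :=
    erMu_mono' hp0 hp1 _ (fun a haS hP => badT_of_not_mem haS hP)
  have hbb := erMu_BadT_le (n := n) hp0 hp1 hK
  linarith

lemma erProb_An_le {n : ℕ} {p : ℝ} (hp0 : 0 ≤ p) (hp1 : p ≤ 1) :
    erProb n p (An n) ≤ 1 := by
  rw [erProb_eq_erMu]
  exact erMu_le_one hp0 hp1 _ _

theorem er_whp_main (α : ℕ → ℝ)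
    (hα : Filter.Tendsto α Filter.atTop Filter.atTop)
    (hαo : Filter.Tendsto (fun n : ℕ => α n / Real.log n) Filter.atTop (nhds 0)) :
    Filter.Tendsto
      (fun n : ℕ => erProb n ((Real.log n + α n) / n) (An n))
      Filter.atTop (nhds 1) := by
  have hlogTop : Tendsto (fun n : ℕ => Real.log n) atTop atTop :=
    Real.tendsto_log_atTop.comp tendsto_natCast_atTop_atTop
  have hev1 : ∀ᶠ n : ℕ in atTop, 0 ≤ α n := hα.eventually_ge_atTop 0
  have hev3 : ∀ᶠ n : ℕ in atTop, 1 ≤ Real.log n := hlogTop.eventually_ge_atTop 1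
  have hdiv : Tendsto (fun n : ℕ => Real.log n / n) atTop (nhds 0) := by
    have h := Real.isLittleO_log_id_atTop.tendsto_div_nhds_zero
    exact h.comp tendsto_natCast_atTop_atTop
  have hev4 : ∀ᶠ n : ℕ in atTop, Real.log n / n ≤ 1 / 16 := by
    have := hdiv.eventually (gt_mem_nhds (show (0:ℝ) < 1/16 by norm_num))
    exact this.mono fun n h => le_of_lt h
  have hev2 : ∀ᶠ n : ℕ in atTop, α n ≤ Real.log n := by
    have h2 : ∀ᶠ n : ℕ in atTop, α n / Real.log n < 1 / 2 :=
      hαo.eventually (gt_mem_nhds (show (0:ℝ) < 1/2 by norm_num))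
    filter_upwards [h2, hev3, hev1] with n h2 h3 h1
    have hLpos : 0 < Real.log n := by linarith
    rw [div_lt_iff₀ hLpos] at h2
    nlinarith
  have hev5 : ∀ᶠ n : ℕ in atTop, 5 ≤ n := eventually_ge_atTop 5
  have hgoal0 : Tendsto (fun n : ℕ => 96 * Real.exp 2 * Real.exp (-(19/50) * Real.log n))
      atTop (nhds 0) := by
    have h1 : Tendsto (fun n : ℕ => -(19/50) * Real.log n) atTop atBot :=
      (tendsto_const_mul_atBot_of_neg (by norm_num : (-(19/50) : ℝ) < 0)).mpr hlogTop
    have h2 : Tendsto (fun n : ℕ => Real.exp (-(19/50) * Real.log n)) atTop (nhds 0) :=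
      Real.tendsto_exp_atBot.comp h1
    have h3 := h2.const_mul (96 * Real.exp 2)
    simpa using h3
  have hlow : ∀ᶠ n : ℕ in atTop,
      1 - 96 * Real.exp 2 * Real.exp (-(19/50) * Real.log n)
        ≤ erProb n ((Real.log n + α n) / n) (An n) := by
    filter_upwards [hev1, hev2, hev3, hev4, hev5] with n h1 h2 h3 h4 h5
    have hn0 : (0:ℝ) < (n:ℝ) := by
      have : (5:ℝ) ≤ (n:ℝ) := by exact_mod_cast h5
      linarith
    have hp0 : 0 ≤ (Real.log n + α n) / n := div_nonneg (by linarith) hn0.le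
    have hLn16 : Real.log n ≤ (n:ℝ) / 16 := by
      rw [div_le_iff₀ hn0] at h4
      linarith
    have hp1 : (Real.log n + α n) / n ≤ 1 := by
      rw [div_le_one hn0]
      linarith
    have hK0 : 0 ≤ Real.log n / 100 := by linarith
    have hge := erProb_An_ge (n := n) hp0 hp1 hK0
    have hBnd := Bnd_le_exp h1 h2 h3 h4 h5
    linarith
  have hup : ∀ᶠ n : ℕ in atTop, erProb n ((Real.log n + α n) / n) (An n) ≤ 1 := by
    filter_upwards [hev1, hev2, hev3, hev4, hev5] with n h1 h2 h3 h4 h5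
    have hn0 : (0:ℝ) < (n:ℝ) := by
      have : (5:ℝ) ≤ (n:ℝ) := by exact_mod_cast h5
      linarith
    have hp0 : 0 ≤ (Real.log n + α n) / n := div_nonneg (by linarith) hn0.le
    have hLn16 : Real.log n ≤ (n:ℝ) / 16 := by
      rw [div_le_iff₀ hn0] at h4
      linarith
    have hp1 : (Real.log n + α n) / n ≤ 1 := by
      rw [div_le_one hn0]
      linarith
    exact erProb_An_le hp0 hp1
  have hlowlim : Tendsto
      (fun n : ℕ => 1 - 96 * Real.exp 2 * Real.exp (-(19/50) * Real.log n))
      atTop (nhds 1) := by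
    have h := Filter.Tendsto.sub
      (tendsto_const_nhds : Tendsto (fun _ : ℕ => (1:ℝ)) atTop (nhds 1)) hgoal0
    simpa using h
  exact tendsto_of_tendsto_of_tendsto_of_le_of_le' hlowlim tendsto_const_nhds hlow hup

end Main

end ERgraph

/-- If `α n → +∞`, `α n = o(log n)`, and `p n = (log n + α n) / n`, then w.h.p. every pair of
distinct small vertices (degree less than `(log n)/100`) of `G(n, p n)` is at graph distance
greater than 2 (in particular, not adjacent and with no common neighbor). -/
theorem er_small_vertices_far_apart_whp (α : ℕ → ℝ)
    (hα : Filter.Tendsto α Filter.atTop Filter.atTop)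
    (hαo : Filter.Tendsto (fun n : ℕ => α n / Real.log n) Filter.atTop (nhds 0)) :
    Filter.Tendsto
      (fun n : ℕ => erProb n ((Real.log n + α n) / n)
        {G | ∀ u v : Fin n, u ≠ v →
          ((G.neighborSet u).ncard : ℝ) < Real.log n / 100 →
          ((G.neighborSet v).ncard : ℝ) < Real.log n / 100 →
          (2 : ℕ∞) < G.edist u v})
      Filter.atTop (nhds 1) :=
  er_whp_main α hα hαo
end

section
/- Let G = (V,E) be a graph and let t be a nonnegative integer. If there exist two connected spanning subgraphs G₁ = (V, E₁) and G₂ = (V, E₂) of G such that |E₁ ∩ E₂| ≤ t, then the proper connection number of G satisfies pc(G) ≤ t + 4. -/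
open SimpleGraph Walk List

private lemma exists_parent {V : Type*} {H : SimpleGraph V} (hc : H.Connected) (r : V) :
    ∀ v, v ≠ r → ∃ w, H.Adj v w ∧ H.dist r w + 1 = H.dist r v := by
  intro v hv
  obtain ⟨p, hp⟩ := hc.exists_walk_length_eq_dist v r
  obtain ⟨w, hadj, q, rfl⟩ := p.exists_eq_cons_of_ne hv
  refine ⟨w, hadj, ?_⟩
  have h1 : H.dist r w ≤ q.length := by
    rw [SimpleGraph.dist_comm]; exact dist_le q
  have h2 : H.dist r v ≤ H.dist r w + 1 := by
    have := hc.dist_triangle (u := r) (v := w) (w := v)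
    have hwv : H.dist w v = 1 := dist_eq_one_iff_adj.mpr hadj.symm
    omega
  have h3 : q.length + 1 = H.dist v r := by simpa using hp
  rw [SimpleGraph.dist_comm] at h3
  omega

private def minD {V : Type*} (d : V → ℕ) : Sym2 V → ℕ :=
  Sym2.lift ⟨fun x y => min (d x) (d y), fun x y => by simp [min_comm]⟩

@[simp] private lemma minD_mk {V : Type*} (d : V → ℕ) (x y : V) :
    minD d s(x, y) = min (d x) (d y) := rfl

private lemma exists_upwalk {V : Type*} {G H : SimpleGraph V} (hle : H ≤ G) (hc : H.Connected)
    (r : V) (v : V) :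
    ∃ p : G.Walk v r, p.IsPath ∧ (∀ e ∈ p.edges, e ∈ H.edgeSet) ∧
      (∀ x ∈ p.support, H.dist r x ≤ H.dist r v) ∧
      p.edges.Chain' (fun e e' => e ∈ H.edgeSet ∧ e' ∈ H.edgeSet ∧
        minD (H.dist r) e = minD (H.dist r) e' + 1) ∧
      (∀ e ∈ p.edges.head?, minD (H.dist r) e + 1 = H.dist r v) := by
  suffices h : ∀ n v, H.dist r v = n → ∃ p : G.Walk v r, p.IsPath ∧
      (∀ e ∈ p.edges, e ∈ H.edgeSet) ∧
      (∀ x ∈ p.support, H.dist r x ≤ H.dist r v) ∧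
      p.edges.Chain' (fun e e' => e ∈ H.edgeSet ∧ e' ∈ H.edgeSet ∧
        minD (H.dist r) e = minD (H.dist r) e' + 1) ∧
      (∀ e ∈ p.edges.head?, minD (H.dist r) e + 1 = H.dist r v) from h _ v rfl
  intro n
  induction n using Nat.strong_induction_on with
  | _ n ih =>
    intro v hn
    by_cases hv : v = r
    · subst hv
      exact ⟨Walk.nil, by simp, by simp, by simp, by simp [List.Chain'], by simp⟩
    · obtain ⟨w, hadj, hd⟩ := exists_parent hc r v hv
      have hdn : H.dist r w < n := by omega
      obtain ⟨q, hq, hqe, hqs, hqc, hqh⟩ := ih (H.dist r w) hdn w rfl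
      have hvq : v ∉ q.support := fun hmem => by
        have := hqs v hmem; omega
      refine ⟨Walk.cons (hle hadj) q, hq.cons hvq, ?_, ?_, ?_, ?_⟩
      · intro e he
        rw [Walk.edges_cons, List.mem_cons] at he
        rcases he with rfl | he
        · exact hadj
        · exact hqe e he
      · intro x hx
        rw [Walk.support_cons, List.mem_cons] at hx
        rcases hx with rfl | hx
        · omega
        · have := hqs x hx; omega
      · rw [Walk.edges_cons]
        rw [List.Chain', List.isChain_cons]
        refine ⟨?_, hqc⟩
        intro b hb
        have hb' : b ∈ q.edges := List.mem_of_mem_head? hb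
        have hbv := hqh b hb
        refine ⟨hadj, hqe b hb', ?_⟩
        simp only [minD_mk]
        omega
      · intro e he
        rw [Walk.edges_cons] at he
        simp only [List.head?_cons, Option.mem_some_iff] at he
        subst he
        simp only [minD_mk]
        omega

private lemma takeUntil_start_support {V : Type*} [DecidableEq V] {G : SimpleGraph V} {u r : V}
    (p : G.Walk u r) (h : u ∈ p.support) : (p.takeUntil u h).support = [u] := by
  have h1 := p.count_support_takeUntil_eq_one h
  generalize hT : p.takeUntil u h = T at h1 ⊢
  cases T with
  | nil => simp
  | cons a q =>
    exfalso
    rw [Walk.support_cons, List.count_cons_self] at h1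
    have : u ∈ q.support := q.end_mem_support
    have : 0 < q.support.count u := List.count_pos_iff.mpr this
    omega

private lemma exists_first_meet {V : Type*} [DecidableEq V] {G : SimpleGraph V} {u r : V}
    (p : G.Walk u r) (S : Set V) (hr : r ∈ S) :
    ∃ (w : V) (hw : w ∈ p.support), w ∈ S ∧
      ∀ x ∈ (p.takeUntil w hw).support, x ∈ S → x = w := by
  induction p with
  | @nil c =>
    refine ⟨c, by simp, hr, ?_⟩
    intro x hx _
    have := Walk.support_takeUntil_subset _ (by simp : c ∈ (Walk.nil : G.Walk c c).support) hx
    simpa using this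
  | @cons a b c h q ih =>
    by_cases ha : a ∈ S
    · refine ⟨a, Walk.start_mem_support _, ha, ?_⟩
      intro x hx _
      rw [takeUntil_start_support] at hx
      simpa using hx
    · obtain ⟨w, hw, hwS, hmin⟩ := ih hr
      have hne : a ≠ w := fun hh => ha (hh ▸ hwS)
      have hw' : w ∈ (Walk.cons h q).support := by
        rw [Walk.support_cons]; exact List.mem_cons_of_mem _ hw
      refine ⟨w, hw', hwS, ?_⟩
      intro x hx hxS
      have heq : (Walk.cons h q).takeUntil w hw' = Walk.cons h (q.takeUntil w hw) := by
        rw [Walk.takeUntil]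
        simp [hne]
      rw [heq, Walk.support_cons, List.mem_cons] at hx
      rcases hx with rfl | hx
      · exact absurd hxS ha
      · exact hmin x hx hxS



/-- If a graph `G` has two connected spanning subgraphs `G₁` and `G₂` whose edge sets share
at most `t` edges, then the proper connection number of `G` is at most `t + 4`. -/
theorem pc_le_of_two_spanning_subgraphs {V : Type*} [Fintype V] (G G₁ G₂ : SimpleGraph V)
    (t : ℕ) (h₁ : G₁ ≤ G) (h₂ : G₂ ≤ G) (hc₁ : G₁.Connected) (hc₂ : G₂.Connected)
    (ht : (G₁.edgeSet ∩ G₂.edgeSet).ncard ≤ t) :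
    properConnectionNumber G ≤ t + 4 := by
  classical
  obtain ⟨r⟩ := hc₁.nonempty
  set F : Set (Sym2 V) := G₁.edgeSet ∩ G₂.edgeSet with hF
  haveI : Fintype F := (Set.toFinite F).fintype
  have hN : Fintype.card F ≤ t := by
    have : F.ncard = Fintype.card F := by
      rw [Set.ncard_eq_toFinset_card', Set.toFinset_card]
    omega
  set idx : Sym2 V → ℕ := fun e => if h : e ∈ F then (Fintype.equivFin F ⟨e, h⟩ : ℕ) else 0
    with hidx
  have idx_lt : ∀ e, e ∈ F → idx e < Fintype.card F := by
    intro e he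
    simp only [hidx, dif_pos he]
    exact (Fintype.equivFin F ⟨e, he⟩).isLt
  have idx_inj : ∀ e, e ∈ F → ∀ e', e' ∈ F → idx e = idx e' → e = e' := by
    intro e he e' he' h
    simp only [hidx, dif_pos he, dif_pos he'] at h
    have := (Fintype.equivFin F).injective (Fin.val_injective h)
    exact Subtype.ext_iff.mp this
  set d₁ : V → ℕ := G₁.dist r with hd₁
  set d₂ : V → ℕ := G₂.dist r with hd₂
  set c : Sym2 V → ℕ := fun e =>
    if e ∈ F then 4 + idx e
    else if e ∈ G₁.edgeSet then minD d₁ e % 2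
    else if e ∈ G₂.edgeSet then 2 + minD d₂ e % 2
    else 0 with hc
  -- value lemmas
  have hcF : ∀ e ∈ F, c e = 4 + idx e := by
    intro e he; simp only [hc, if_pos he]
  have hc1 : ∀ e, e ∉ F → e ∈ G₁.edgeSet → c e = minD d₁ e % 2 := by
    intro e he h1; simp only [hc, if_neg he, if_pos h1]
  have hc2 : ∀ e, e ∉ F → e ∈ G₂.edgeSet → c e = 2 + minD d₂ e % 2 := by
    intro e he h2
    have h1 : e ∉ G₁.edgeSet := fun h1 => he ⟨h1, h2⟩
    simp only [hc, if_neg he, if_neg h1, if_pos h2]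
  have hc1b : ∀ e, e ∉ F → e ∈ G₁.edgeSet → c e ≤ 1 := by
    intro e he h1; rw [hc1 e he h1]; omega
  have hc2b : ∀ e, e ∉ F → e ∈ G₂.edgeSet → 2 ≤ c e ∧ c e ≤ 3 := by
    intro e he h2; rw [hc2 e he h2]; omega
  have hcFb : ∀ e ∈ F, 4 ≤ c e := by
    intro e he; rw [hcF e he]; omega
  -- key inequality lemmas
  have keyF : ∀ a b : Sym2 V, a ≠ b → (a ∈ F ∨ b ∈ F) →
      a ∈ G₁.edgeSet ∪ G₂.edgeSet → b ∈ G₁.edgeSet ∪ G₂.edgeSet → c a ≠ c b := by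
    intro a b hne _hor ha hb
    by_cases haF : a ∈ F <;> by_cases hbF : b ∈ F
    · rw [hcF a haF, hcF b hbF]
      intro h
      exact hne (idx_inj a haF b hbF (by omega))
    · have h4 := hcFb a haF
      have : c b ≤ 3 := by
        rcases hb with hb | hb
        · exact le_trans (hc1b b hbF hb) (by norm_num)
        · exact (hc2b b hbF hb).2
      omega
    · have h4 := hcFb b hbF
      have : c a ≤ 3 := by
        rcases ha with ha | ha
        · exact le_trans (hc1b a haF ha) (by norm_num)
        · exact (hc2b a haF ha).2
      omega
    · tauto
  have keyA : ∀ a b : Sym2 V, a ∈ G₁.edgeSet → b ∈ G₁.edgeSet →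
      minD d₁ a = minD d₁ b + 1 → c a ≠ c b := by
    intro a b ha hb hm
    have hne : a ≠ b := by rintro rfl; omega
    by_cases haF : a ∈ F
    · exact keyF a b hne (Or.inl haF) (Or.inl ha) (Or.inl hb)
    · by_cases hbF : b ∈ F
      · exact keyF a b hne (Or.inr hbF) (Or.inl ha) (Or.inl hb)
      · rw [hc1 a haF ha, hc1 b hbF hb]; omega
  have keyB : ∀ a b : Sym2 V, a ∈ G₂.edgeSet → b ∈ G₂.edgeSet →
      minD d₂ a = minD d₂ b + 1 → c a ≠ c b := by
    intro a b ha hb hm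
    have hne : a ≠ b := by rintro rfl; omega
    by_cases haF : a ∈ F
    · exact keyF a b hne (Or.inl haF) (Or.inr ha) (Or.inr hb)
    · by_cases hbF : b ∈ F
      · exact keyF a b hne (Or.inr hbF) (Or.inr ha) (Or.inr hb)
      · rw [hc2 a haF ha, hc2 b hbF hb]; omega
  have keyC : ∀ a b : Sym2 V, a ∈ G₁.edgeSet → b ∈ G₂.edgeSet → a ≠ b → c a ≠ c b := by
    intro a b ha hb hne
    by_cases haF : a ∈ F
    · exact keyF a b hne (Or.inl haF) (Or.inl ha) (Or.inr hb)
    · by_cases hbF : b ∈ F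
      · exact keyF a b hne (Or.inr hbF) (Or.inl ha) (Or.inr hb)
      · have h1 := hc1b a haF ha
        have h2 := (hc2b b hbF hb).1
        omega
  apply Nat.sInf_le
  refine ⟨c, ?_, ?_⟩
  · intro e
    by_cases he : e ∈ F
    · rw [hcF e he]
      have := idx_lt e he
      omega
    · simp only [hc, if_neg he]
      split <;> [omega; skip]
      split <;> omega
  · intro u v _huv
    obtain ⟨P, hP, hPe, _, hPc, _⟩ := exists_upwalk h₁ hc₁ r u
    obtain ⟨Q, hQ, hQe, _, hQc, _⟩ := exists_upwalk h₂ hc₂ r v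
    set Q' : G.Walk r v := Q.reverse with hQ'
    have hQ'path : Q'.IsPath := hQ.reverse
    obtain ⟨w, hw, hwS, hmin⟩ :=
      exists_first_meet P {x | x ∈ Q'.support} (by simp [Set.mem_setOf_eq])
    have hwQ : w ∈ Q'.support := hwS
    refine ⟨(P.takeUntil w hw).append (Q'.dropUntil w hwQ), ?_, ?_⟩
    · -- IsPath
      rw [Walk.isPath_def, Walk.support_append]
      have hs1 : (P.takeUntil w hw).support.Nodup := (hP.takeUntil hw).support_nodup
      have hseg2 : (Q'.dropUntil w hwQ).IsPath := hQ'path.dropUntil hwQ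
      have hs2 : (Q'.dropUntil w hwQ).support.Nodup := hseg2.support_nodup
      have hcons := Walk.support_eq_cons (Q'.dropUntil w hwQ)
      rw [hcons] at hs2
      obtain ⟨hwnot, htail⟩ := List.nodup_cons.mp hs2
      refine hs1.append htail ?_
      intro x hx1 hx2
      have hx3 : x ∈ (Q'.dropUntil w hwQ).support := by
        rw [hcons]; exact List.mem_cons_of_mem _ hx2
      have hxQ : x ∈ Q'.support := Walk.support_dropUntil_subset _ hwQ hx3
      have := hmin x hx1 hxQ
      subst this
      exact hwnot hx2
    · -- proper coloring chain
      rw [List.Chain', List.isChain_map, Walk.edges_append, List.isChain_append]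
      have hpre : (P.takeUntil w hw).edges <+: P.edges :=
        ⟨(P.dropUntil w hw).edges, by rw [← Walk.edges_append, Walk.take_spec]⟩
      have hsuf : (Q'.dropUntil w hwQ).edges <:+ Q'.edges :=
        ⟨(Q'.takeUntil w hwQ).edges, by rw [← Walk.edges_append, Walk.take_spec]⟩
      refine ⟨?_, ?_, ?_⟩
      · refine (List.IsChain.prefix hPc hpre).imp ?_
        rintro a b ⟨ha, hb, hm⟩
        exact keyA a b ha hb hm
      · have hchainQ' : List.Chain' (fun e e' => e' ∈ G₂.edgeSet ∧ e ∈ G₂.edgeSet ∧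
            minD (G₂.dist r) e' = minD (G₂.dist r) e + 1) Q'.edges := by
          rw [List.Chain', hQ', Walk.edges_reverse, List.isChain_reverse]
          exact hQc
        refine (List.IsChain.suffix hchainQ' hsuf).imp ?_
        rintro a b ⟨hb, ha, hm⟩
        exact (keyB b a hb ha hm).symm
      · intro x hx y hy
        have hx1 : x ∈ (P.takeUntil w hw).edges := List.mem_of_mem_getLast? hx
        have hy1 : y ∈ (Q'.dropUntil w hwQ).edges := List.mem_of_mem_head? hy
        have hxE1 : x ∈ G₁.edgeSet := hPe x (Walk.edges_takeUntil_subset _ hw hx1)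
        have hyE2 : y ∈ G₂.edgeSet := by
          have hyQ' : y ∈ Q'.edges := Walk.edges_dropUntil_subset _ hwQ hy1
          rw [hQ', Walk.edges_reverse, List.mem_reverse] at hyQ'
          exact hQe y hyQ'
        have hne : x ≠ y := by
          rintro rfl
          obtain ⟨⟨a, b⟩, rfl⟩ := x.exists_rep
          have ha1 : a ∈ (P.takeUntil w hw).support :=
            Walk.fst_mem_support_of_mem_edges _ hx1
          have hb1 : b ∈ (P.takeUntil w hw).support :=
            Walk.snd_mem_support_of_mem_edges _ hx1
          have ha2 : a ∈ Q'.support :=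
            Walk.support_dropUntil_subset _ hwQ (Walk.fst_mem_support_of_mem_edges _ hy1)
          have hb2 : b ∈ Q'.support :=
            Walk.support_dropUntil_subset _ hwQ (Walk.snd_mem_support_of_mem_edges _ hy1)
          have haw : a = w := hmin a ha1 ha2
          have hbw : b = w := hmin b hb1 hb2
          subst haw; subst hbw
          exact G₂.irrefl hyE2
        exact keyC x y hxE1 hyE2 hne
end
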